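/- arXiv:2202.00605 — 7 statements merged into one kernel-verified Lean document; each statement's English description precedes it below -/
import Mathlib

section
/- For every incentive compatible menu (γ^k)_{k∈K}, there exists an incentive compatible menu (γ̄^k)_{k∈K} in which every distribution γ̄^k is supported on the finite set Ξ*, and whose sender expected utility is at least the sender expected utility of (γ^k). (Hence there always exists a sender-optimal menu of signaling schemes encoded as probability distributions over Ξ*.) -/
open Finset

noncomputable section



lemma combo_apply_eq {E : Type*} [DecidableEq E] {ι : Type*} (J : Finset ι) (p : ι → E)
    (q : ι → ℝ) (η : E) :
    (∑ j ∈ J, Finsupp.single (p j) (q j)) η = ∑ j ∈ J, if p j = η then q j else 0 := by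
  rw [Finset.sum_apply']
  exact Finset.sum_congr rfl fun j _ => Finsupp.single_apply

lemma combo_nonneg {E : Type*} [DecidableEq E] {ι : Type*} (J : Finset ι) (p : ι → E)
    (q : ι → ℝ) (hq : ∀ j ∈ J, 0 ≤ q j) (η : E) :
    0 ≤ (∑ j ∈ J, Finsupp.single (p j) (q j)) η := by
  rw [combo_apply_eq]
  refine Finset.sum_nonneg fun j hj => ?_
  split
  · exact hq j hj
  · exact le_refl 0

lemma combo_support {E : Type*} [DecidableEq E] {ι : Type*} (J : Finset ι) (p : ι → E)
    (q : ι → ℝ) :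
    (∑ j ∈ J, Finsupp.single (p j) (q j)).support ⊆ J.image p := by
  refine Finsupp.support_finset_sum.trans ?_
  intro η hη
  rw [Finset.mem_biUnion] at hη
  obtain ⟨j, hj, hs⟩ := hη
  have h2 := Finsupp.support_single_subset hs
  simp only [Finset.mem_singleton] at h2
  subst h2
  exact Finset.mem_image_of_mem p hj

lemma combo_sum {E : Type*} [DecidableEq E] {ι : Type*} (J : Finset ι) (p : ι → E)
    (q : ι → ℝ) (f : E → ℝ) :
    ∑ η ∈ (∑ j ∈ J, Finsupp.single (p j) (q j)).support,
      (∑ j ∈ J, Finsupp.single (p j) (q j)) η * f η = ∑ j ∈ J, q j * f (p j) := by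
  rw [Finset.sum_subset (combo_support J p q)
    (fun η _ hns => by rw [Finsupp.notMem_support_iff.mp hns, zero_mul])]
  have h1 : ∀ η ∈ J.image p, (∑ j ∈ J, Finsupp.single (p j) (q j)) η * f η
      = ∑ j ∈ J, if p j = η then q j * f (p j) else 0 := by
    intro η hη
    rw [combo_apply_eq, Finset.sum_mul]
    refine Finset.sum_congr rfl fun j hj => ?_
    split_ifs with h
    · rw [h]
    · rw [zero_mul]
  rw [Finset.sum_congr rfl h1, Finset.sum_comm]
  refine Finset.sum_congr rfl fun j hj => ?_
  rw [Finset.sum_ite_eq (J.image p) (p j) (fun _ => q j * f (p j))]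
  rw [if_pos (Finset.mem_image_of_mem p hj)]



lemma hull_ext_of_polytope {E : Type*} [NormedAddCommGroup E] [NormedSpace ℝ E]
    [FiniteDimensional ℝ E] {ι : Type*} [Finite ι]
    (g : ι → E →ₗ[ℝ] ℝ) (c : ι → ℝ)
    (hcomp : IsCompact {x : E | ∀ i, g i x ≤ c i}) :
    {x : E | ∀ i, g i x ≤ c i} ⊆
      convexHull ℝ (Set.extremePoints ℝ {x : E | ∀ i, g i x ≤ c i}) := by
  classical
  set S : Set E := {x : E | ∀ i, g i x ≤ c i} with hSdef
  have hmemS : ∀ x : E, x ∈ S ↔ ∀ i, g i x ≤ c i := fun x => Iff.rfl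
  have hconv : Convex ℝ S := by
    intro x hx y hy a bb ha hb hab
    rw [hmemS]
    intro i
    have h1 : g i (a • x + bb • y) = a * g i x + bb * g i y := by
      simp [map_add, map_smul, smul_eq_mul]
    rw [h1]
    calc a * g i x + bb * g i y ≤ a * c i + bb * c i :=
          add_le_add (mul_le_mul_of_nonneg_left (hx i) ha) (mul_le_mul_of_nonneg_left (hy i) hb)
      _ = c i := by rw [← add_mul, hab, one_mul]
  have key : ∀ x ∈ Set.extremePoints ℝ S, ∀ y : E,
      (∀ i, g i x = c i → g i y = c i) → y = x := by
    intro x hx y hty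
    obtain ⟨hxS, hxe⟩ := hx
    set d := y - x with hd
    have hd0 : ∀ i, g i x = c i → g i d = 0 := by
      intro i hi
      simp [hd, map_sub, hty i hi, hi]
    set U : Set ℝ := ⋂ i, {s : ℝ | g i x = c i ∨ g i x + s * g i d < c i} with hU
    have hUopen : IsOpen U := by
      refine isOpen_iInter_of_finite fun i => ?_
      by_cases h : g i x = c i
      · simp only [h, true_or, Set.setOf_true]
        exact isOpen_univ
      · simp only [h, false_or]
        exact isOpen_lt (continuous_const.add (continuous_id.mul continuous_const))
          continuous_const
    have h0U : (0 : ℝ) ∈ U := by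
      rw [hU, Set.mem_iInter]
      intro i
      by_cases h : g i x = c i
      · exact Or.inl h
      · exact Or.inr (by simpa using lt_of_le_of_ne (hxS i) h)
    obtain ⟨ε, hε, hball⟩ := Metric.isOpen_iff.mp hUopen 0 h0U
    have hmem : ∀ s : ℝ, |s| < ε → x + s • d ∈ S := by
      intro s hs
      have hsU : s ∈ U := hball (by simpa [Real.dist_eq] using hs)
      rw [hU, Set.mem_iInter] at hsU
      rw [hmemS]
      intro i
      have h1 : g i (x + s • d) = g i x + s * g i d := by
        simp [map_add, map_smul, smul_eq_mul]
      rcases hsU i with h | h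
      · rw [h1, hd0 i h, mul_zero, add_zero, h]
      · rw [h1]; exact h.le
    set s0 : ℝ := ε / 2 with hs0
    have hs0pos : 0 < s0 := by positivity
    have h1 : x + s0 • d ∈ S := hmem s0 (by rw [abs_of_pos hs0pos]; simpa [hs0] using by linarith)
    have h2 : x + (-s0) • d ∈ S := hmem (-s0) (by rw [abs_neg, abs_of_pos hs0pos]; linarith)
    have hseg : x ∈ openSegment ℝ (x + s0 • d) (x + (-s0) • d) := by
      refine ⟨1/2, 1/2, by norm_num, by norm_num, by norm_num, ?_⟩
      module
    have heq := (hxe h1 h2 hseg)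
    have hzero : s0 • d = 0 := by
      have := heq
      rwa [add_eq_left] at this
    have hdz : d = 0 := by
      rcases smul_eq_zero.mp hzero with h | h
      · exact absurd h hs0pos.ne'
      · exact h
    rw [hd] at hdz
    exact sub_eq_zero.mp hdz
  have hfin : (Set.extremePoints ℝ S).Finite := by
    haveI := Fintype.ofFinite ι
    rw [← Set.finite_coe_iff]
    refine Finite.of_injective
      (fun x : Set.extremePoints ℝ S => Finset.univ.filter (fun i => g i x.1 = c i)) ?_
    intro x y hxy
    dsimp only at hxy
    have hx := key y.1 y.2 x.1 (fun i hi => by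
      have h2 : i ∈ Finset.univ.filter (fun i => g i x.1 = c i) := by
        rw [hxy]; simp [hi]
      simpa using h2)
    exact Subtype.ext hx
  have hKM := closure_convexHull_extremePoints hcomp hconv
  have hclosed : IsClosed (convexHull ℝ (Set.extremePoints ℝ S)) :=
    (hfin.isCompact_convexHull (𝕜 := ℝ)).isClosed
  intro x hx
  rw [← hclosed.closure_eq, hKM]
  exact hx

def lincomb {Θ : Type*} [Fintype Θ] (c : Θ → ℝ) : (Θ → ℝ) →ₗ[ℝ] ℝ where
  toFun x := ∑ θ, x θ * c θ
  map_add' x y := by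
    simp only [Pi.add_apply, add_mul, Finset.sum_add_distrib]
  map_smul' r x := by
    simp only [Pi.smul_apply, smul_eq_mul, RingHom.id_apply, Finset.mul_sum, mul_assoc]

@[simp] lemma lincomb_apply {Θ : Type*} [Fintype Θ] (c : Θ → ℝ) (x : Θ → ℝ) :
    lincomb c x = ∑ θ, x θ * c θ := rfl

def Sset {Θ K A : Type*} [Fintype Θ] [Fintype K] [Fintype A]
    (u : K → Θ → A → ℝ) (ap : K → A) : Set (Θ → ℝ) :=
  {ξ : Θ → ℝ | ((∀ θ, 0 ≤ ξ θ) ∧ ∑ θ, ξ θ = 1) ∧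
    ∀ k' : K, ∀ a' : A, ∑ θ, ξ θ * u k' θ a' ≤ ∑ θ, ξ θ * u k' θ (ap k')}

lemma Sset_decomp {Θ K A : Type*} [Fintype Θ] [Fintype K] [Fintype A]
    (u : K → Θ → A → ℝ) (ap : K → A) {ξ : Θ → ℝ} (hξ : ξ ∈ Sset u ap) :
    ∃ (t : Finset (Θ → ℝ)) (w : (Θ → ℝ) → ℝ),
      (↑t ⊆ Set.extremePoints ℝ (Sset u ap)) ∧ (∀ v ∈ t, 0 ≤ w v) ∧
      (∑ v ∈ t, w v = 1) ∧ (∑ v ∈ t, w v • v = ξ) := by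
  classical
  set gg : (Θ ⊕ Bool) ⊕ K × A → ((Θ → ℝ) →ₗ[ℝ] ℝ) :=
    Sum.elim
      (Sum.elim (fun θ => lincomb (fun θ' => if θ' = θ then (-1 : ℝ) else 0))
        (fun bb => lincomb (fun _ => if bb then (1 : ℝ) else -1)))
      (fun ka => lincomb (fun θ => u ka.1 θ ka.2 - u ka.1 θ (ap ka.1))) with hgg
  set cc : (Θ ⊕ Bool) ⊕ K × A → ℝ :=
    Sum.elim (Sum.elim (fun _ => 0) (fun bb => if bb then 1 else -1)) (fun _ => 0) with hcc
  have hval1 : ∀ (θ : Θ) (x : Θ → ℝ), gg (Sum.inl (Sum.inl θ)) x = -x θ := by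
    intro θ x
    simp only [hgg, Sum.elim_inl, lincomb_apply, mul_ite, mul_neg_one, mul_zero]
    rw [Finset.sum_ite_eq' Finset.univ θ (fun θ' => -x θ')]
    simp
  have hval2 : ∀ (bb : Bool) (x : Θ → ℝ),
      gg (Sum.inl (Sum.inr bb)) x = if bb then ∑ θ, x θ else -∑ θ, x θ := by
    intro bb x
    cases bb <;> simp [hgg]
  have hval3 : ∀ (k : K) (a : A) (x : Θ → ℝ),
      gg (Sum.inr (k, a)) x = ∑ θ, x θ * u k θ a - ∑ θ, x θ * u k θ (ap k) := by
    intro k a x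
    simp [hgg, mul_sub, Finset.sum_sub_distrib]
  have hset : Sset u ap = {x : Θ → ℝ | ∀ i, gg i x ≤ cc i} := by
    ext x
    simp only [Sset, Set.mem_setOf_eq]
    constructor
    · rintro ⟨⟨hpos, hsum⟩, hBR⟩ i
      rcases i with (θ | bb) | ⟨k, a⟩
      · rw [hval1]
        simpa [hcc] using neg_nonpos.mpr (hpos θ)
      · cases bb
        · rw [hval2]
          simp [hcc, hsum]
        · rw [hval2]
          simp [hcc, hsum]
      · rw [hval3]
        simpa [hcc] using sub_nonpos.mpr (hBR k a)
    · intro h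
      have hp : ∀ θ, 0 ≤ x θ := by
        intro θ
        have := h (Sum.inl (Sum.inl θ))
        rw [hval1] at this
        simpa [hcc] using this
      have hs : ∑ θ, x θ = 1 := by
        have h1 := h (Sum.inl (Sum.inr true))
        have h2 := h (Sum.inl (Sum.inr false))
        rw [hval2] at h1 h2
        simp [hcc] at h1 h2
        linarith
      refine ⟨⟨hp, hs⟩, fun k a => ?_⟩
      have := h (Sum.inr (k, a))
      rw [hval3] at this
      simpa [hcc] using sub_nonpos.mp (by simpa [hcc] using this)
  have hclosed : IsClosed {x : Θ → ℝ | ∀ i, gg i x ≤ cc i} := by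
    have heq : {x : Θ → ℝ | ∀ i, gg i x ≤ cc i} = ⋂ i, (gg i) ⁻¹' Set.Iic (cc i) := by
      ext x; simp [Set.mem_iInter]
    rw [heq]
    exact isClosed_iInter fun i =>
      (isClosed_Iic).preimage (gg i).continuous_of_finiteDimensional
  have hsub : Sset u ap ⊆ Set.Icc (0 : Θ → ℝ) 1 := by
    rintro x ⟨⟨hpos, hsum⟩, -⟩
    constructor
    · intro θ; exact hpos θ
    · intro θ
      calc x θ ≤ ∑ θ', x θ' := Finset.single_le_sum (fun i _ => hpos i) (Finset.mem_univ θ)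
        _ = 1 := hsum
  have hcomp : IsCompact {x : Θ → ℝ | ∀ i, gg i x ≤ cc i} := by
    refine IsCompact.of_isClosed_subset (isCompact_Icc (a := (0 : Θ → ℝ)) (b := 1)) hclosed ?_
    rw [← hset]; exact hsub
  have hhull := hull_ext_of_polytope gg cc hcomp
  rw [← hset] at hhull
  have hmem := hhull hξ
  rw [convexHull_eq_union_convexHull_finite_subsets] at hmem
  simp only [Set.mem_iUnion] at hmem
  obtain ⟨t, ht, hmem⟩ := hmem
  obtain ⟨w, hw0, hw1, hrep⟩ := Finset.mem_convexHull'.mp hmem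
  exact ⟨t, w, ht, hw0, hw1, hrep⟩

/-- Single-receiver Bayesian persuasion with type reporting: for every
incentive compatible menu `(γ k)` of finitely supported distributions over posteriors, there
exists an incentive compatible menu `(γbar k)` supported on the finite set `Ξ*` (the union, over
action profiles `ap : K → A`, of the extreme points of the polytopes `Ξ^ap`) whose sender expected
utility is at least that of `(γ k)`. -/
theorem exists_menu_supported_on_vertices
    {Θ A K : Type*} [Fintype Θ] [Fintype A] [Fintype K]
    [Nonempty Θ] [Nonempty A] [Nonempty K]
    (μ : Θ → ℝ) (hμpos : ∀ θ, 0 < μ θ) (hμsum : ∑ θ, μ θ = 1)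
    (u : K → Θ → A → ℝ) (hu : ∀ k θ a, u k θ a ∈ Set.Icc (0 : ℝ) 1)
    (us : Θ → A → ℝ) (hus : ∀ θ a, us θ a ∈ Set.Icc (0 : ℝ) 1)
    (lam : K → ℝ) (hlam : ∀ k, 0 ≤ lam k) (hlamsum : ∑ k, lam k = 1)
    -- `b k ξ` is the receiver's best response at posterior `ξ` for type `k`,
    -- with ties broken in favor of the sender:
    (b : K → (Θ → ℝ) → A)
    (hbBR : ∀ k ξ, (∀ θ, 0 ≤ ξ θ) → ∑ θ, ξ θ = 1 →
      ∀ a : A, ∑ θ, ξ θ * u k θ a ≤ ∑ θ, ξ θ * u k θ (b k ξ))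
    (hbSender : ∀ k ξ, (∀ θ, 0 ≤ ξ θ) → ∑ θ, ξ θ = 1 →
      ∀ a : A, (∀ a' : A, ∑ θ, ξ θ * u k θ a' ≤ ∑ θ, ξ θ * u k θ a) →
        ∑ θ, ξ θ * us θ a ≤ ∑ θ, ξ θ * us θ (b k ξ))
    -- the given menu: finitely supported probability distributions over posteriors
    (γ : K → ((Θ → ℝ) →₀ ℝ))
    (hγnn : ∀ k ξ, 0 ≤ γ k ξ)
    (hγpost : ∀ k, ∀ ξ ∈ (γ k).support, (∀ θ, 0 ≤ ξ θ) ∧ ∑ θ, ξ θ = 1)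
    (hγone : ∀ k, ∑ ξ ∈ (γ k).support, γ k ξ = 1)
    -- Bayes plausibility
    (hγbayes : ∀ k θ, ∑ ξ ∈ (γ k).support, γ k ξ * ξ θ = μ θ)
    -- incentive compatibility
    (hγIC : ∀ k k', k ≠ k' →
      ∑ ξ ∈ (γ k').support, γ k' ξ * ∑ θ, ξ θ * u k θ (b k ξ) ≤
        ∑ ξ ∈ (γ k).support, γ k ξ * ∑ θ, ξ θ * u k θ (b k ξ)) :
    ∃ γbar : K → ((Θ → ℝ) →₀ ℝ),
      (∀ k ξ, 0 ≤ γbar k ξ) ∧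
      (∀ k, ∀ ξ ∈ (γbar k).support, (∀ θ, 0 ≤ ξ θ) ∧ ∑ θ, ξ θ = 1) ∧
      (∀ k, ∑ ξ ∈ (γbar k).support, γbar k ξ = 1) ∧
      (∀ k θ, ∑ ξ ∈ (γbar k).support, γbar k ξ * ξ θ = μ θ) ∧
      (∀ k k', k ≠ k' →
        ∑ ξ ∈ (γbar k').support, γbar k' ξ * ∑ θ, ξ θ * u k θ (b k ξ) ≤
          ∑ ξ ∈ (γbar k).support, γbar k ξ * ∑ θ, ξ θ * u k θ (b k ξ)) ∧
      -- every distribution in the new menu is supported on `Ξ*`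
      (∀ k, ((γbar k).support : Set (Θ → ℝ)) ⊆
        ⋃ ap : K → A, Set.extremePoints ℝ
          {ξ : Θ → ℝ | ((∀ θ, 0 ≤ ξ θ) ∧ ∑ θ, ξ θ = 1) ∧
            ∀ k' : K, ∀ a' : A,
              ∑ θ, ξ θ * u k' θ a' ≤ ∑ θ, ξ θ * u k' θ (ap k')}) ∧
      -- the sender's expected utility does not decrease
      (∑ k, lam k * ∑ ξ ∈ (γ k).support, γ k ξ * ∑ θ, ξ θ * us θ (b k ξ) ≤
        ∑ k, lam k * ∑ ξ ∈ (γbar k).support, γbar k ξ * ∑ θ, ξ θ * us θ (b k ξ)) := by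
  classical
  -- decomposition of each posterior into extreme points
  have hex : ∀ ξ : Θ → ℝ, ∃ (t : Finset (Θ → ℝ)) (w : (Θ → ℝ) → ℝ),
      ((∀ θ, 0 ≤ ξ θ) ∧ ∑ θ, ξ θ = 1) →
      ((↑t ⊆ Set.extremePoints ℝ (Sset u (fun j => b j ξ))) ∧ (∀ v ∈ t, 0 ≤ w v) ∧
        (∑ v ∈ t, w v = 1) ∧ (∑ v ∈ t, w v • v = ξ)) := by
    intro ξ
    by_cases h : (∀ θ, 0 ≤ ξ θ) ∧ ∑ θ, ξ θ = 1
    · obtain ⟨t, w, h1, h2, h3, h4⟩ := Sset_decomp u (fun j => b j ξ)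
        (show ξ ∈ Sset u (fun j => b j ξ) from
          ⟨h, fun k' a' => hbBR k' ξ h.1 h.2 a'⟩)
      exact ⟨t, w, fun _ => ⟨h1, h2, h3, h4⟩⟩
    · exact ⟨∅, fun _ => 0, fun hc => absurd hc h⟩
  choose t w hdec using hex
  -- the new menu
  set γbar : K → ((Θ → ℝ) →₀ ℝ) := fun k =>
    ∑ j ∈ (γ k).support.sigma (fun ξ => t ξ),
      Finsupp.single j.2 (γ k j.1 * w j.1 j.2) with hγbar
  -- collected facts about the decomposition at each used posterior
  have hfacts : ∀ k, ∀ ξ ∈ (γ k).support,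
      (∀ v ∈ t ξ, 0 ≤ w ξ v) ∧ (∑ v ∈ t ξ, w ξ v = 1) ∧
      (∀ v ∈ t ξ, v ∈ Set.extremePoints ℝ (Sset u (fun j => b j ξ))) ∧
      (∀ θ, ∑ v ∈ t ξ, w ξ v * v θ = ξ θ) ∧
      (∀ k'', ∑ v ∈ t ξ, w ξ v * ∑ θ, v θ * u k'' θ (b k'' v)
          = ∑ θ, ξ θ * u k'' θ (b k'' ξ)) ∧
      (∀ k'', ∑ θ, ξ θ * us θ (b k'' ξ)
          ≤ ∑ v ∈ t ξ, w ξ v * ∑ θ, v θ * us θ (b k'' v)) := by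
    intro k ξ hξ
    obtain ⟨hsubext, hw0, hw1, hrep⟩ := hdec ξ (hγpost k ξ hξ)
    have hvmem : ∀ v ∈ t ξ, v ∈ Sset u (fun j => b j ξ) := fun v hv =>
      extremePoints_subset (hsubext hv)
    have hrepθ : ∀ θ, ∑ v ∈ t ξ, w ξ v * v θ = ξ θ := by
      intro θ
      have h := congrFun hrep θ
      simpa [Finset.sum_apply, Pi.smul_apply, smul_eq_mul] using h
    have hlin : ∀ cc : Θ → ℝ,
        ∑ v ∈ t ξ, w ξ v * ∑ θ, v θ * cc θ = ∑ θ, ξ θ * cc θ := by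
      intro cc
      calc ∑ v ∈ t ξ, w ξ v * ∑ θ, v θ * cc θ
          = ∑ v ∈ t ξ, ∑ θ, w ξ v * (v θ * cc θ) := by
            exact Finset.sum_congr rfl fun v _ => Finset.mul_sum _ _ _
        _ = ∑ θ, ∑ v ∈ t ξ, w ξ v * (v θ * cc θ) := Finset.sum_comm
        _ = ∑ θ, (∑ v ∈ t ξ, w ξ v * v θ) * cc θ := by
            refine Finset.sum_congr rfl fun θ _ => ?_
            rw [Finset.sum_mul]
            exact Finset.sum_congr rfl fun v _ => by ring
        _ = ∑ θ, ξ θ * cc θ := by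
            exact Finset.sum_congr rfl fun θ _ => by rw [hrepθ θ]
    refine ⟨hw0, hw1, fun v hv => hsubext hv, hrepθ, ?_, ?_⟩
    · intro k''
      have h1 : ∀ v ∈ t ξ, ∑ θ, v θ * u k'' θ (b k'' v) = ∑ θ, v θ * u k'' θ (b k'' ξ) := by
        intro v hv
        obtain ⟨⟨hvpos, hvsum⟩, hvBR⟩ := hvmem v hv
        exact le_antisymm (hvBR k'' (b k'' v)) (hbBR k'' v hvpos hvsum (b k'' ξ))
      calc ∑ v ∈ t ξ, w ξ v * ∑ θ, v θ * u k'' θ (b k'' v)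
          = ∑ v ∈ t ξ, w ξ v * ∑ θ, v θ * u k'' θ (b k'' ξ) :=
            Finset.sum_congr rfl fun v hv => by rw [h1 v hv]
        _ = ∑ θ, ξ θ * u k'' θ (b k'' ξ) := hlin _
    · intro k''
      rw [show ∑ θ, ξ θ * us θ (b k'' ξ) = ∑ v ∈ t ξ, w ξ v * ∑ θ, v θ * us θ (b k'' ξ) from
        (hlin (fun θ => us θ (b k'' ξ))).symm]
      refine Finset.sum_le_sum fun v hv => ?_
      refine mul_le_mul_of_nonneg_left ?_ (hw0 v hv)
      obtain ⟨⟨hvpos, hvsum⟩, hvBR⟩ := hvmem v hv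
      exact hbSender k'' v hvpos hvsum (b k'' ξ) (fun a' => hvBR k'' a')
  -- master computation
  have hkey : ∀ k (f : (Θ → ℝ) → ℝ),
      ∑ η ∈ (γbar k).support, γbar k η * f η
        = ∑ ξ ∈ (γ k).support, γ k ξ * ∑ v ∈ t ξ, w ξ v * f v := by
    intro k f
    rw [hγbar]
    rw [combo_sum ((γ k).support.sigma (fun ξ => t ξ)) (fun j => j.2)
      (fun j => γ k j.1 * w j.1 j.2) f]
    rw [Finset.sum_sigma]
    refine Finset.sum_congr rfl fun ξ _ => ?_
    rw [Finset.mul_sum]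
    exact Finset.sum_congr rfl fun v _ => mul_assoc _ _ _
  have hsupp : ∀ k, ∀ η ∈ (γbar k).support,
      ∃ ξ ∈ (γ k).support, η ∈ t ξ := by
    intro k η hη
    rw [hγbar] at hη
    have h := combo_support ((γ k).support.sigma (fun ξ => t ξ)) (fun j => j.2)
      (fun j => γ k j.1 * w j.1 j.2) hη
    rw [Finset.mem_image] at h
    obtain ⟨j, hj, hje⟩ := h
    rw [Finset.mem_sigma] at hj
    exact ⟨j.1, hj.1, hje ▸ hj.2⟩
  refine ⟨γbar, ?_, ?_, ?_, ?_, ?_, ?_, ?_⟩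
  · -- nonnegativity
    intro k η
    rw [hγbar]
    refine combo_nonneg _ _ _ (fun j hj => ?_) η
    rw [Finset.mem_sigma] at hj
    exact mul_nonneg (hγnn k j.1) ((hfacts k j.1 hj.1).1 j.2 hj.2)
  · -- support consists of posteriors
    intro k η hη
    obtain ⟨ξ, hξ, hηt⟩ := hsupp k η hη
    have h := extremePoints_subset ((hfacts k ξ hξ).2.2.1 η hηt)
    exact h.1
  · -- total mass one
    intro k
    have h := hkey k (fun _ => 1)
    simp only [mul_one] at h
    rw [h, ← hγone k]
    refine Finset.sum_congr rfl fun ξ hξ => ?_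
    rw [(hfacts k ξ hξ).2.1, mul_one]
  · -- Bayes plausibility
    intro k θ
    rw [hkey k (fun η => η θ), ← hγbayes k θ]
    refine Finset.sum_congr rfl fun ξ hξ => ?_
    rw [(hfacts k ξ hξ).2.2.2.1 θ]
  · -- incentive compatibility
    intro k k' hkk
    have e : ∀ kk, ∑ ξ ∈ (γ kk).support, γ kk ξ * ∑ v ∈ t ξ, w ξ v * ∑ θ, v θ * u k θ (b k v)
        = ∑ ξ ∈ (γ kk).support, γ kk ξ * ∑ θ, ξ θ * u k θ (b k ξ) := fun kk =>
      Finset.sum_congr rfl fun ξ hξ => by rw [(hfacts kk ξ hξ).2.2.2.2.1 k]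
    rw [hkey k' (fun η => ∑ θ, η θ * u k θ (b k η)),
      hkey k (fun η => ∑ θ, η θ * u k θ (b k η)), e k', e k]
    exact hγIC k k' hkk
  · -- support in the union of extreme points
    intro k η hη
    obtain ⟨ξ, hξ, hηt⟩ := hsupp k η (by exact hη)
    have h := (hfacts k ξ hξ).2.2.1 η hηt
    exact Set.mem_iUnion.mpr ⟨fun j => b j ξ, h⟩
  · -- sender utility does not decrease
    refine Finset.sum_le_sum fun k _ => ?_
    refine mul_le_mul_of_nonneg_left ?_ (hlam k)
    rw [hkey k (fun η => ∑ θ, η θ * us θ (b k η))]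
    refine Finset.sum_le_sum fun ξ hξ => ?_
    exact mul_le_mul_of_nonneg_left ((hfacts k ξ hξ).2.2.2.2.2 k) (hγnn k ξ)
end
end

section
/- There exists a persuasive, incentive compatible direct menu (φ^k)_{k∈K} whose sender expected utility is greater than or equal to the sender expected utility of every incentive compatible menu (γ^k)_{k∈K} of finitely supported distributions over posteriors. (In single-receiver instances, there always exists an optimal menu of direct and persuasive signaling schemes.) -/
open Finset

noncomputable section

/-- Single-receiver Bayesian persuasion with type reporting: there exists a
persuasive, incentive compatible direct menu whose sender expected utility is at least the sender
expected utility of every incentive compatible menu of finitely supported distributions over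
posteriors. -/
theorem exists_optimal_direct_persuasive_menu
    {Θ A K : Type*} [Fintype Θ] [Fintype A] [Fintype K]
    [Nonempty Θ] [Nonempty A] [Nonempty K]
    (μ : Θ → ℝ) (hμpos : ∀ θ, 0 < μ θ) (hμsum : ∑ θ, μ θ = 1)
    (u : K → Θ → A → ℝ) (hu : ∀ k θ a, u k θ a ∈ Set.Icc (0 : ℝ) 1)
    (us : Θ → A → ℝ) (hus : ∀ θ a, us θ a ∈ Set.Icc (0 : ℝ) 1)
    (lam : K → ℝ) (hlam : ∀ k, 0 ≤ lam k) (hlamsum : ∑ k, lam k = 1)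
    -- `b k ξ` is the receiver's best response at posterior `ξ` for type `k`,
    -- with ties broken in favor of the sender:
    (b : K → (Θ → ℝ) → A)
    (hbBR : ∀ k ξ, (∀ θ, 0 ≤ ξ θ) → ∑ θ, ξ θ = 1 →
      ∀ a : A, ∑ θ, ξ θ * u k θ a ≤ ∑ θ, ξ θ * u k θ (b k ξ))
    (hbSender : ∀ k ξ, (∀ θ, 0 ≤ ξ θ) → ∑ θ, ξ θ = 1 →
      ∀ a : A, (∀ a' : A, ∑ θ, ξ θ * u k θ a' ≤ ∑ θ, ξ θ * u k θ a) →
        ∑ θ, ξ θ * us θ a ≤ ∑ θ, ξ θ * us θ (b k ξ)) :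
    ∃ φ : K → Θ → A → ℝ,
      -- `φ` is a direct menu: `φ k θ` is a distribution over action recommendations
      (∀ k θ a, 0 ≤ φ k θ a) ∧
      (∀ k θ, ∑ a, φ k θ a = 1) ∧
      -- persuasiveness
      (∀ k, ∀ a a' : A,
        ∑ θ, μ θ * φ k θ a * u k θ a' ≤ ∑ θ, μ θ * φ k θ a * u k θ a) ∧
      -- incentive compatibility of the direct menu
      (∀ k k', k ≠ k' →
        ∑ a, Finset.univ.sup' Finset.univ_nonempty
            (fun a' : A => ∑ θ, μ θ * φ k' θ a * u k θ a') ≤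
          ∑ a, ∑ θ, μ θ * φ k θ a * u k θ a) ∧
      -- optimality: it beats every incentive compatible menu of distributions over posteriors
      (∀ γ : K → ((Θ → ℝ) →₀ ℝ),
        (∀ k ξ, 0 ≤ γ k ξ) →
        (∀ k, ∀ ξ ∈ (γ k).support, (∀ θ, 0 ≤ ξ θ) ∧ ∑ θ, ξ θ = 1) →
        (∀ k, ∑ ξ ∈ (γ k).support, γ k ξ = 1) →
        (∀ k θ, ∑ ξ ∈ (γ k).support, γ k ξ * ξ θ = μ θ) →
        (∀ k k', k ≠ k' →
          ∑ ξ ∈ (γ k').support, γ k' ξ * ∑ θ, ξ θ * u k θ (b k ξ) ≤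
            ∑ ξ ∈ (γ k).support, γ k ξ * ∑ θ, ξ θ * u k θ (b k ξ)) →
        ∑ k, lam k * ∑ ξ ∈ (γ k).support, γ k ξ * ∑ θ, ξ θ * us θ (b k ξ) ≤
          ∑ k, lam k * ∑ θ, μ θ * ∑ a, φ k θ a * us θ a) := by
  classical
  -- evaluation maps are continuous
  have hev : ∀ (k : K) (θ : Θ) (a : A),
      Continuous fun φ : K → Θ → A → ℝ => φ k θ a := fun k θ a =>
    (continuous_apply a).comp ((continuous_apply θ).comp (continuous_apply k))
  have hc : ∀ (k k' : K) (a a' : A),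
      Continuous fun φ : K → Θ → A → ℝ => ∑ θ, μ θ * φ k' θ a * u k θ a' := fun k k' a a' =>
    continuous_finset_sum _ fun θ _ => (continuous_const.mul (hev k' θ a)).mul continuous_const
  -- the feasible set of direct menus
  set S : Set (K → Θ → A → ℝ) := {φ |
    (∀ k θ a, 0 ≤ φ k θ a) ∧
    (∀ k θ, ∑ a, φ k θ a = 1) ∧
    (∀ k, ∀ a a' : A, ∑ θ, μ θ * φ k θ a * u k θ a' ≤ ∑ θ, μ θ * φ k θ a * u k θ a) ∧
    (∀ k k' : K, ∀ g : A → A,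
      ∑ a, ∑ θ, μ θ * φ k' θ a * u k θ (g a) ≤ ∑ a, ∑ θ, μ θ * φ k θ a * u k θ a)} with hSdef
  -- S is closed
  have hSclosed : IsClosed S := by
    rw [hSdef]
    simp only [Set.setOf_and]
    refine IsClosed.inter ?_ (IsClosed.inter ?_ (IsClosed.inter ?_ ?_))
    · have : {φ : K → Θ → A → ℝ | ∀ k θ a, 0 ≤ φ k θ a}
          = ⋂ k, ⋂ θ, ⋂ a, {φ : K → Θ → A → ℝ | 0 ≤ φ k θ a} := by ext φ; simp
      rw [this]
      exact isClosed_iInter fun k => isClosed_iInter fun θ => isClosed_iInter fun a =>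
        isClosed_le continuous_const (hev k θ a)
    · have : {φ : K → Θ → A → ℝ | ∀ k θ, ∑ a, φ k θ a = 1}
          = ⋂ k, ⋂ θ, {φ : K → Θ → A → ℝ | ∑ a, φ k θ a = 1} := by ext φ; simp
      rw [this]
      exact isClosed_iInter fun k => isClosed_iInter fun θ =>
        isClosed_eq (continuous_finset_sum _ fun a _ => hev k θ a) continuous_const
    · have : {φ : K → Θ → A → ℝ |
          ∀ k, ∀ a a' : A, ∑ θ, μ θ * φ k θ a * u k θ a' ≤ ∑ θ, μ θ * φ k θ a * u k θ a}
          = ⋂ k, ⋂ a, ⋂ a', {φ : K → Θ → A → ℝ |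
              ∑ θ, μ θ * φ k θ a * u k θ a' ≤ ∑ θ, μ θ * φ k θ a * u k θ a} := by ext φ; simp
      rw [this]
      exact isClosed_iInter fun k => isClosed_iInter fun a => isClosed_iInter fun a' =>
        isClosed_le (hc k k a a') (hc k k a a)
    · have : {φ : K → Θ → A → ℝ | ∀ k k' : K, ∀ g : A → A,
          ∑ a, ∑ θ, μ θ * φ k' θ a * u k θ (g a) ≤ ∑ a, ∑ θ, μ θ * φ k θ a * u k θ a}
          = ⋂ k, ⋂ k', ⋂ g : A → A, {φ : K → Θ → A → ℝ |
              ∑ a, ∑ θ, μ θ * φ k' θ a * u k θ (g a) ≤ ∑ a, ∑ θ, μ θ * φ k θ a * u k θ a} := by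
        ext φ; simp
      rw [this]
      exact isClosed_iInter fun k => isClosed_iInter fun k' => isClosed_iInter fun g =>
        isClosed_le (continuous_finset_sum _ fun a _ => hc k k' a (g a))
          (continuous_finset_sum _ fun a _ => hc k k a a)
  -- S is contained in a compact box
  have hbox : IsCompact {φ : K → Θ → A → ℝ | ∀ k θ a, φ k θ a ∈ Set.Icc (0:ℝ) 1} := by
    have : {φ : K → Θ → A → ℝ | ∀ k θ a, φ k θ a ∈ Set.Icc (0:ℝ) 1}
        = Set.pi Set.univ (fun _ : K => Set.pi Set.univ fun _ : Θ =>
            Set.pi Set.univ fun _ : A => Set.Icc (0:ℝ) 1) := by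
      ext φ; simp [Set.mem_pi, Set.mem_Icc, Pi.le_def, forall_and]
    rw [this]
    exact isCompact_univ_pi fun _ => isCompact_univ_pi fun _ =>
      isCompact_univ_pi fun _ => isCompact_Icc
  have hsub : S ⊆ {φ : K → Θ → A → ℝ | ∀ k θ a, φ k θ a ∈ Set.Icc (0:ℝ) 1} := by
    intro φ hφ
    obtain ⟨h0, h1, -, -⟩ := hφ
    intro k θ a
    refine ⟨h0 k θ a, ?_⟩
    have := Finset.single_le_sum (f := fun a => φ k θ a)
      (fun i _ => h0 k θ i) (Finset.mem_univ a)
    rwa [h1 k θ] at this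
  have hScomp : IsCompact S := hbox.of_isClosed_subset hSclosed hsub
  -- S is nonempty: the trivial direct menu recommending `b k μ`
  have hS0 : (fun (k : K) (_ : Θ) (a : A) => if a = b k μ then (1:ℝ) else 0) ∈ S := by
    have e : ∀ (kk : K) (w : A → Θ → ℝ),
        ∑ a, ∑ θ, μ θ * (if a = b kk μ then (1:ℝ) else 0) * w a θ = ∑ θ, μ θ * w (b kk μ) θ := by
      intro kk w
      rw [Finset.sum_eq_single_of_mem (b kk μ) (Finset.mem_univ _)]
      · simp
      · intro a _ h; simp [h]
    refine ⟨?_, ?_, ?_, ?_⟩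
    · intro k θ a; dsimp only; split_ifs <;> norm_num
    · intro k θ; simp
    · intro k a a'
      rcases eq_or_ne a (b k μ) with rfl | h
      · simpa using hbBR k μ (fun θ => (hμpos θ).le) hμsum a'
      · simp [h]
    · intro k k' g
      rw [e k' (fun a θ => u k θ (g a)), e k (fun a θ => u k θ a)]
      exact hbBR k μ (fun θ => (hμpos θ).le) hμsum (g (b k' μ))
  have hSne : S.Nonempty := ⟨_, hS0⟩
  -- objective is continuous
  have hFcont : Continuous fun φ : K → Θ → A → ℝ =>
      ∑ k, lam k * ∑ θ, μ θ * ∑ a, φ k θ a * us θ a := by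
    refine continuous_finset_sum _ fun k _ => continuous_const.mul ?_
    refine continuous_finset_sum _ fun θ _ => continuous_const.mul ?_
    exact continuous_finset_sum _ fun a _ => (hev k θ a).mul continuous_const
  -- take a maximizer
  obtain ⟨φ, hφS, hφmax⟩ := hScomp.exists_isMaxOn hSne hFcont.continuousOn
  obtain ⟨h0, h1, h3, h4⟩ := hφS
  refine ⟨φ, h0, h1, h3, ?_, ?_⟩
  · -- sup'-form incentive compatibility
    intro k k' _
    have hex : ∀ a : A, ∃ a' : A,
        Finset.univ.sup' Finset.univ_nonempty
          (fun a' : A => ∑ θ, μ θ * φ k' θ a * u k θ a') = ∑ θ, μ θ * φ k' θ a * u k θ a' := by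
      intro a
      obtain ⟨a', _, h⟩ := Finset.exists_mem_eq_sup' Finset.univ_nonempty
        (fun a' : A => ∑ θ, μ θ * φ k' θ a * u k θ a')
      exact ⟨a', h⟩
    choose g hg using hex
    calc ∑ a, Finset.univ.sup' Finset.univ_nonempty
            (fun a' : A => ∑ θ, μ θ * φ k' θ a * u k θ a')
        = ∑ a, ∑ θ, μ θ * φ k' θ a * u k θ (g a) := Finset.sum_congr rfl fun a _ => hg a
      _ ≤ ∑ a, ∑ θ, μ θ * φ k θ a * u k θ a := h4 k k' g
  · -- optimality against every IC menu
    intro γ hγ0 hγpost hγ1 hγBayes hγIC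
    -- the induced direct menu
    set ψ : K → Θ → A → ℝ := fun k θ a =>
      (∑ ξ ∈ (γ k).support, if b k ξ = a then γ k ξ * ξ θ else 0) / μ θ with hψdef
    have key : ∀ (k : K) (a : A) (v : Θ → ℝ),
        ∑ θ, μ θ * ψ k θ a * v θ
          = ∑ ξ ∈ (γ k).support, (if b k ξ = a then γ k ξ * ∑ θ, ξ θ * v θ else 0) := by
      intro k a v
      have h1' : ∀ θ : Θ, μ θ * ψ k θ a * v θ
          = ∑ ξ ∈ (γ k).support, (if b k ξ = a then γ k ξ * (ξ θ * v θ) else 0) := by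
        intro θ
        have hμ : μ θ ≠ 0 := (hμpos θ).ne'
        rw [hψdef]
        simp only []
        rw [mul_div_cancel₀ _ hμ, Finset.sum_mul]
        refine Finset.sum_congr rfl fun ξ _ => ?_
        split_ifs
        · ring
        · simp
      calc ∑ θ, μ θ * ψ k θ a * v θ
          = ∑ θ, ∑ ξ ∈ (γ k).support, (if b k ξ = a then γ k ξ * (ξ θ * v θ) else 0) :=
            Finset.sum_congr rfl fun θ _ => h1' θ
        _ = ∑ ξ ∈ (γ k).support, ∑ θ, (if b k ξ = a then γ k ξ * (ξ θ * v θ) else 0) :=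
            Finset.sum_comm
        _ = ∑ ξ ∈ (γ k).support, (if b k ξ = a then γ k ξ * ∑ θ, ξ θ * v θ else 0) := by
            refine Finset.sum_congr rfl fun ξ _ => ?_
            split_ifs
            · rw [Finset.mul_sum]
            · simp
    have collapse : ∀ (k : K) (c : (Θ → ℝ) → ℝ),
        ∑ a, ∑ ξ ∈ (γ k).support, (if b k ξ = a then c ξ else 0)
          = ∑ ξ ∈ (γ k).support, c ξ := by
      intro k c
      rw [Finset.sum_comm]
      refine Finset.sum_congr rfl fun ξ _ => ?_
      simp [Finset.sum_ite_eq]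
    have hψS : ψ ∈ S := by
      refine ⟨?_, ?_, ?_, ?_⟩
      · intro k θ a
        refine div_nonneg (Finset.sum_nonneg fun ξ hξ => ?_) (hμpos θ).le
        split_ifs
        · exact mul_nonneg (hγ0 k ξ) ((hγpost k ξ hξ).1 θ)
        · exact le_rfl
      · intro k θ
        rw [hψdef]
        simp only []
        rw [← Finset.sum_div, collapse k (fun ξ => γ k ξ * ξ θ), hγBayes k θ,
          div_self (hμpos θ).ne']
      · intro k a a'
        rw [key k a (fun θ => u k θ a'), key k a (fun θ => u k θ a)]
        refine Finset.sum_le_sum fun ξ hξ => ?_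
        split_ifs with h
        · subst h
          exact mul_le_mul_of_nonneg_left
            (hbBR k ξ (hγpost k ξ hξ).1 (hγpost k ξ hξ).2 a') (hγ0 k ξ)
        · exact le_rfl
      · intro k k' g
        have hR : ∑ a, ∑ θ, μ θ * ψ k θ a * u k θ a
            = ∑ ξ ∈ (γ k).support, γ k ξ * ∑ θ, ξ θ * u k θ (b k ξ) := by
          calc ∑ a, ∑ θ, μ θ * ψ k θ a * u k θ a
              = ∑ a, ∑ ξ ∈ (γ k).support,
                  (if b k ξ = a then γ k ξ * ∑ θ, ξ θ * u k θ a else 0) :=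
                Finset.sum_congr rfl fun a _ => key k a _
            _ = ∑ a, ∑ ξ ∈ (γ k).support,
                  (if b k ξ = a then γ k ξ * ∑ θ, ξ θ * u k θ (b k ξ) else 0) := by
                refine Finset.sum_congr rfl fun a _ => Finset.sum_congr rfl fun ξ _ => ?_
                split_ifs with h
                · rw [h]
                · rfl
            _ = _ := collapse k _
        have hL : ∑ a, ∑ θ, μ θ * ψ k' θ a * u k θ (g a)
            ≤ ∑ ξ ∈ (γ k').support, γ k' ξ * ∑ θ, ξ θ * u k θ (b k ξ) := by
          calc ∑ a, ∑ θ, μ θ * ψ k' θ a * u k θ (g a)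
              = ∑ a, ∑ ξ ∈ (γ k').support,
                  (if b k' ξ = a then γ k' ξ * ∑ θ, ξ θ * u k θ (g a) else 0) :=
                Finset.sum_congr rfl fun a _ => key k' a _
            _ ≤ ∑ a, ∑ ξ ∈ (γ k').support,
                  (if b k' ξ = a then γ k' ξ * ∑ θ, ξ θ * u k θ (b k ξ) else 0) := by
                refine Finset.sum_le_sum fun a _ => Finset.sum_le_sum fun ξ hξ => ?_
                split_ifs
                · exact mul_le_mul_of_nonneg_left
                    (hbBR k ξ (hγpost k' ξ hξ).1 (hγpost k' ξ hξ).2 (g a)) (hγ0 k' ξ)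
                · exact le_rfl
            _ = _ := collapse k' _
        rcases eq_or_ne k k' with rfl | hne
        · rw [hR]; exact hL
        · rw [hR]; exact hL.trans (hγIC k k' hne)
    have hFψ : ∀ k : K, ∑ θ, μ θ * ∑ a, ψ k θ a * us θ a
        = ∑ ξ ∈ (γ k).support, γ k ξ * ∑ θ, ξ θ * us θ (b k ξ) := by
      intro k
      have hswap : ∑ θ, μ θ * ∑ a, ψ k θ a * us θ a
          = ∑ a, ∑ θ, μ θ * ψ k θ a * us θ a := by
        simp_rw [Finset.mul_sum, ← mul_assoc]
        exact Finset.sum_comm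
      rw [hswap]
      calc ∑ a, ∑ θ, μ θ * ψ k θ a * us θ a
          = ∑ a, ∑ ξ ∈ (γ k).support,
              (if b k ξ = a then γ k ξ * ∑ θ, ξ θ * us θ a else 0) :=
            Finset.sum_congr rfl fun a _ => key k a _
        _ = ∑ a, ∑ ξ ∈ (γ k).support,
              (if b k ξ = a then γ k ξ * ∑ θ, ξ θ * us θ (b k ξ) else 0) := by
            refine Finset.sum_congr rfl fun a _ => Finset.sum_congr rfl fun ξ _ => ?_
            split_ifs with h
            · rw [h]
            · rfl
        _ = _ := collapse k _
    calc ∑ k, lam k * ∑ ξ ∈ (γ k).support, γ k ξ * ∑ θ, ξ θ * us θ (b k ξ)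
        = ∑ k, lam k * ∑ θ, μ θ * ∑ a, ψ k θ a * us θ a :=
          Finset.sum_congr rfl fun k _ => by rw [hFψ k]
      _ ≤ ∑ k, lam k * ∑ θ, μ θ * ∑ a, φ k θ a * us θ a := hφmax hψS
end
end

section
/- If (γ^k)_{k∈𝒦} is an incentive compatible menu, then there exists a persuasive, incentive compatible direct marginal menu (x^k)_{k∈𝒦} such that for every type k ∈ 𝒦 and every state θ ∈ Θ: μ_θ x^k_θ ≥ Σ_{ξ : b^k_ξ = a1} γ^k_ξ ξ_θ; that is, in every state the joint probability that the receiver plays a1 weakly increases when passing to the direct marginal menu. -/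
open Finset

noncomputable section

/-- The receiver's best response at posterior `ξ` for type `k`, with binary actions
(`true` = a1, `false` = a0) and ties broken in favor of `a1`: the receiver plays `a1`
iff the expected utility of `a1` is at least that of `a0`. -/
noncomputable def bestA1 {Θ 𝒦 : Type*} [Fintype Θ]
    (u : 𝒦 → Θ → Bool → ℝ) (k : 𝒦) (ξ : Θ → ℝ) : Bool :=
  if ∑ θ, ξ θ * u k θ false ≤ ∑ θ, ξ θ * u k θ true then true else false

lemma bestA1_is_max {Θ 𝒦 : Type*} [Fintype Θ]
    (u : 𝒦 → Θ → Bool → ℝ) (k : 𝒦) (ξ : Θ → ℝ) (a : Bool) :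
    ∑ θ, ξ θ * u k θ a ≤ ∑ θ, ξ θ * u k θ (bestA1 u k ξ) := by
  unfold bestA1
  split
  · cases a
    · assumption
    · exact le_rfl
  · cases a
    · exact le_rfl
    · linarith [lt_of_not_ge (by assumption : ¬ _)]

/-- Single receiver, two actions: every incentive compatible menu of
distributions over posteriors can be turned into a persuasive, incentive compatible direct
marginal menu in which, in every state, the joint probability that the receiver plays `a1`
weakly increases. -/
theorem exists_direct_marginal_menu_dominating
    {Θ 𝒦 : Type*} [Fintype Θ] [Fintype 𝒦] [Nonempty Θ] [Nonempty 𝒦]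
    (μ : Θ → ℝ) (hμpos : ∀ θ, 0 < μ θ) (hμsum : ∑ θ, μ θ = 1)
    (u : 𝒦 → Θ → Bool → ℝ) (hu : ∀ k θ a, u k θ a ∈ Set.Icc (0 : ℝ) 1)
    -- the given menu: finitely supported probability distributions over posteriors
    (γ : 𝒦 → ((Θ → ℝ) →₀ ℝ))
    (hγnn : ∀ k ξ, 0 ≤ γ k ξ)
    (hγpost : ∀ k, ∀ ξ ∈ (γ k).support, (∀ θ, 0 ≤ ξ θ) ∧ ∑ θ, ξ θ = 1)
    (hγone : ∀ k, ∑ ξ ∈ (γ k).support, γ k ξ = 1)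
    (hγbayes : ∀ k θ, ∑ ξ ∈ (γ k).support, γ k ξ * ξ θ = μ θ)
    -- incentive compatibility of the given menu
    (hγIC : ∀ k k', k ≠ k' →
      ∑ ξ ∈ (γ k').support, γ k' ξ * ∑ θ, ξ θ * u k θ (bestA1 u k ξ) ≤
        ∑ ξ ∈ (γ k).support, γ k ξ * ∑ θ, ξ θ * u k θ (bestA1 u k ξ)) :
    ∃ x : 𝒦 → Θ → ℝ,
      (∀ k θ, x k θ ∈ Set.Icc (0 : ℝ) 1) ∧
      -- persuasiveness
      (∀ k, 0 ≤ ∑ θ, μ θ * x k θ * (u k θ true - u k θ false)) ∧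
      (∀ k, 0 ≤ ∑ θ, μ θ * (1 - x k θ) * (u k θ false - u k θ true)) ∧
      -- incentive compatibility of the direct marginal menu
      (∀ k k', k ≠ k' →
        max (∑ θ, μ θ * x k' θ * u k θ true) (∑ θ, μ θ * x k' θ * u k θ false) +
          max (∑ θ, μ θ * (1 - x k' θ) * u k θ true)
              (∑ θ, μ θ * (1 - x k' θ) * u k θ false) ≤
        ∑ θ, μ θ * (x k θ * u k θ true + (1 - x k θ) * u k θ false)) ∧
      -- in every state, the probability of playing `a1` weakly increases
      (∀ k θ,
        ∑ ξ ∈ (γ k).support, (if bestA1 u k ξ = true then γ k ξ * ξ θ else 0) ≤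
          μ θ * x k θ) := by
  classical
  set S : 𝒦 → Θ → ℝ :=
    fun k θ => ∑ ξ ∈ (γ k).support, (if bestA1 u k ξ = true then γ k ξ * ξ θ else 0)
    with hSdef
  set T : 𝒦 → Θ → ℝ :=
    fun k θ => ∑ ξ ∈ (γ k).support, (if bestA1 u k ξ = true then 0 else γ k ξ * ξ θ)
    with hTdef
  have hSnn : ∀ k θ, 0 ≤ S k θ := by
    intro k θ
    refine Finset.sum_nonneg fun ξ hξ => ?_
    split
    · exact mul_nonneg (hγnn k ξ) ((hγpost k ξ hξ).1 θ)
    · exact le_rfl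
  have hTnn : ∀ k θ, 0 ≤ T k θ := by
    intro k θ
    refine Finset.sum_nonneg fun ξ hξ => ?_
    split
    · exact le_rfl
    · exact mul_nonneg (hγnn k ξ) ((hγpost k ξ hξ).1 θ)
  have hST : ∀ k θ, S k θ + T k θ = μ θ := by
    intro k θ
    rw [hSdef, hTdef, ← Finset.sum_add_distrib, ← hγbayes k θ]
    refine Finset.sum_congr rfl fun ξ _ => ?_
    split <;> ring
  -- the direct marginal menu
  refine ⟨fun k θ => S k θ / μ θ, ?_, ?_, ?_, ?_, ?_⟩
  case _ =>
    intro k θ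
    constructor
    · exact div_nonneg (hSnn k θ) (hμpos θ).le
    · rw [div_le_one (hμpos θ)]
      nlinarith [hTnn k θ, hST k θ]
  all_goals
    have hμx : ∀ k θ, μ θ * (S k θ / μ θ) = S k θ := fun k θ => by
      rw [mul_comm]; exact div_mul_cancel₀ _ (hμpos θ).ne'
    have hμ1x : ∀ k θ, μ θ * (1 - S k θ / μ θ) = T k θ := fun k θ => by
      have := hST k θ
      have h := hμx k θ
      nlinarith
    have hSsum : ∀ (k k' : 𝒦) (v : Θ → ℝ),
        ∑ θ, S k θ * v θ =
          ∑ ξ ∈ (γ k).support,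
            (if bestA1 u k ξ = true then γ k ξ * ∑ θ, ξ θ * v θ else 0) := by
      intro k k' v
      simp only [hSdef, Finset.sum_mul]
      rw [Finset.sum_comm]
      refine Finset.sum_congr rfl fun ξ _ => ?_
      split
      · rw [Finset.mul_sum]
        exact Finset.sum_congr rfl fun θ _ => by ring
      · simp
    have hTsum : ∀ (k k' : 𝒦) (v : Θ → ℝ),
        ∑ θ, T k θ * v θ =
          ∑ ξ ∈ (γ k).support,
            (if bestA1 u k ξ = true then 0 else γ k ξ * ∑ θ, ξ θ * v θ) := by
      intro k k' v
      simp only [hTdef, Finset.sum_mul]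
      rw [Finset.sum_comm]
      refine Finset.sum_congr rfl fun ξ _ => ?_
      split
      · simp
      · rw [Finset.mul_sum]
        exact Finset.sum_congr rfl fun θ _ => by ring
  case _ =>
    intro k
    have : ∑ θ, μ θ * (S k θ / μ θ) * (u k θ true - u k θ false) =
        ∑ θ, S k θ * (u k θ true - u k θ false) := by
      refine Finset.sum_congr rfl fun θ _ => by rw [hμx k θ]
    rw [this, hSsum k k (fun θ => u k θ true - u k θ false)]
    refine Finset.sum_nonneg fun ξ _ => ?_
    split
    · rename_i h
      have hb : ∑ θ, ξ θ * u k θ false ≤ ∑ θ, ξ θ * u k θ true := by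
        by_contra hc
        simp [bestA1, hc] at h
      refine mul_nonneg (hγnn k ξ) ?_
      have : ∑ θ, ξ θ * (u k θ true - u k θ false) =
          (∑ θ, ξ θ * u k θ true) - ∑ θ, ξ θ * u k θ false := by
        rw [← Finset.sum_sub_distrib]
        exact Finset.sum_congr rfl fun θ _ => by ring
      rw [this]; linarith
    · exact le_rfl
  case _ =>
    intro k
    have : ∑ θ, μ θ * (1 - S k θ / μ θ) * (u k θ false - u k θ true) =
        ∑ θ, T k θ * (u k θ false - u k θ true) := by
      refine Finset.sum_congr rfl fun θ _ => by rw [hμ1x k θ]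
    rw [this, hTsum k k (fun θ => u k θ false - u k θ true)]
    refine Finset.sum_nonneg fun ξ _ => ?_
    split
    · exact le_rfl
    · rename_i h
      have hb : ∑ θ, ξ θ * u k θ true < ∑ θ, ξ θ * u k θ false := by
        by_contra hc
        push_neg at hc
        simp [bestA1, hc] at h
      refine mul_nonneg (hγnn k ξ) ?_
      have : ∑ θ, ξ θ * (u k θ false - u k θ true) =
          (∑ θ, ξ θ * u k θ false) - ∑ θ, ξ θ * u k θ true := by
        rw [← Finset.sum_sub_distrib]
        exact Finset.sum_congr rfl fun θ _ => by ring
      rw [this]; linarith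
  case _ =>
    intro k k' hkk'
    have hA : ∀ a : Bool, ∑ θ, μ θ * (S k' θ / μ θ) * u k θ a =
        ∑ ξ ∈ (γ k').support,
          (if bestA1 u k' ξ = true then γ k' ξ * ∑ θ, ξ θ * u k θ a else 0) := by
      intro a
      have : ∑ θ, μ θ * (S k' θ / μ θ) * u k θ a = ∑ θ, S k' θ * u k θ a := by
        refine Finset.sum_congr rfl fun θ _ => by rw [hμx k' θ]
      rw [this, hSsum k' k (fun θ => u k θ a)]
    have hB : ∀ a : Bool, ∑ θ, μ θ * (1 - S k' θ / μ θ) * u k θ a =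
        ∑ ξ ∈ (γ k').support,
          (if bestA1 u k' ξ = true then 0 else γ k' ξ * ∑ θ, ξ θ * u k θ a) := by
      intro a
      have : ∑ θ, μ θ * (1 - S k' θ / μ θ) * u k θ a = ∑ θ, T k' θ * u k θ a := by
        refine Finset.sum_congr rfl fun θ _ => by rw [hμ1x k' θ]
      rw [this, hTsum k' k (fun θ => u k θ a)]
    -- bound each max by the if-version with the best response of type k
    have hmax1 : max (∑ θ, μ θ * (S k' θ / μ θ) * u k θ true)
        (∑ θ, μ θ * (S k' θ / μ θ) * u k θ false) ≤
        ∑ ξ ∈ (γ k').support,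
          (if bestA1 u k' ξ = true then γ k' ξ * ∑ θ, ξ θ * u k θ (bestA1 u k ξ)
           else 0) := by
      refine max_le ?_ ?_ <;>
      · rw [hA _]
        refine Finset.sum_le_sum fun ξ _ => ?_
        split
        · exact mul_le_mul_of_nonneg_left (bestA1_is_max u k ξ _) (hγnn k' ξ)
        · exact le_rfl
    have hmax2 : max (∑ θ, μ θ * (1 - S k' θ / μ θ) * u k θ true)
        (∑ θ, μ θ * (1 - S k' θ / μ θ) * u k θ false) ≤
        ∑ ξ ∈ (γ k').support,
          (if bestA1 u k' ξ = true then 0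
           else γ k' ξ * ∑ θ, ξ θ * u k θ (bestA1 u k ξ)) := by
      refine max_le ?_ ?_ <;>
      · rw [hB _]
        refine Finset.sum_le_sum fun ξ _ => ?_
        split
        · exact le_rfl
        · exact mul_le_mul_of_nonneg_left (bestA1_is_max u k ξ _) (hγnn k' ξ)
    have hsum : (∑ ξ ∈ (γ k').support,
          (if bestA1 u k' ξ = true then γ k' ξ * ∑ θ, ξ θ * u k θ (bestA1 u k ξ)
           else 0)) +
        (∑ ξ ∈ (γ k').support,
          (if bestA1 u k' ξ = true then 0
           else γ k' ξ * ∑ θ, ξ θ * u k θ (bestA1 u k ξ))) =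
        ∑ ξ ∈ (γ k').support, γ k' ξ * ∑ θ, ξ θ * u k θ (bestA1 u k ξ) := by
      rw [← Finset.sum_add_distrib]
      refine Finset.sum_congr rfl fun ξ _ => ?_
      split <;> ring
    have hRHS : ∑ θ, μ θ * (S k θ / μ θ * u k θ true + (1 - S k θ / μ θ) * u k θ false) =
        ∑ ξ ∈ (γ k).support, γ k ξ * ∑ θ, ξ θ * u k θ (bestA1 u k ξ) := by
      have h1 : ∑ θ, μ θ * (S k θ / μ θ * u k θ true + (1 - S k θ / μ θ) * u k θ false) =
          (∑ θ, S k θ * u k θ true) + ∑ θ, T k θ * u k θ false := by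
        rw [← Finset.sum_add_distrib]
        refine Finset.sum_congr rfl fun θ _ => ?_
        rw [mul_add, ← mul_assoc, ← mul_assoc, hμx k θ, hμ1x k θ]
      rw [h1, hSsum k k (fun θ => u k θ true), hTsum k k (fun θ => u k θ false),
        ← Finset.sum_add_distrib]
      refine Finset.sum_congr rfl fun ξ _ => ?_
      rcases hb : bestA1 u k ξ <;> simp [hb]
    calc max (∑ θ, μ θ * (S k' θ / μ θ) * u k θ true)
          (∑ θ, μ θ * (S k' θ / μ θ) * u k θ false) +
        max (∑ θ, μ θ * (1 - S k' θ / μ θ) * u k θ true)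
          (∑ θ, μ θ * (1 - S k' θ / μ θ) * u k θ false)
        ≤ ∑ ξ ∈ (γ k').support, γ k' ξ * ∑ θ, ξ θ * u k θ (bestA1 u k ξ) := by
          rw [← hsum]; exact add_le_add hmax1 hmax2
      _ ≤ ∑ ξ ∈ (γ k).support, γ k ξ * ∑ θ, ξ θ * u k θ (bestA1 u k ξ) :=
          hγIC k k' hkk'
      _ = _ := hRHS.symm
  case _ =>
    intro k θ
    rw [hμx k θ]
end
end

section
/- Let ℛ be a finite set, f : 2^ℛ → [0,1], and let φ be a probability distribution on the subsets of ℛ whose support has size at most β. Then for every positive integer q there exist subsets R_1, …, R_q ⊆ ℛ (repetitions allowed) such that: (i) for every r ∈ ℛ, |{j ∈ {1,…,q} : r ∈ R_j}| / q ≤ Σ_{R ∋ r} φ(R); and (ii) (1/q) Σ_{j=1}^{q} f(R_j) ≥ Σ_{R⊆ℛ} φ(R) f(R) − β/q. -/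
open Finset

noncomputable section

/-- Equiv between the subtype of a sigma over the fiber at `a` and that fiber. -/
def sigmaFstEquiv {α : Type*} (β : α → Type*) (a : α) :
    {p : Σ i, β i // p.1 = a} ≃ β a where
  toFun p := p.2 ▸ p.1.2
  invFun b := ⟨⟨a, b⟩, rfl⟩
  left_inv := by rintro ⟨⟨i, b⟩, rfl⟩; rfl
  right_inv := by intro b; rfl

/-- Existence of a function `Fin q → α` with prescribed fiber sizes. -/
theorem exists_fn_fiber_card {α : Type*} [Fintype α] [DecidableEq α]
    (m : α → ℕ) (q : ℕ) (h : ∑ a, m a = q) :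
    ∃ R : Fin q → α, ∀ a, (Finset.univ.filter (fun j => R j = a)).card = m a := by
  have hcard : Fintype.card (Σ a : α, Fin (m a)) = Fintype.card (Fin q) := by
    simp [Fintype.card_sigma, h]
  obtain ⟨e⟩ := Fintype.card_eq.mp hcard.symm
  refine ⟨fun j => (e j).1, fun a => ?_⟩
  have h1 : (Finset.univ.filter (fun j : Fin q => (e j).1 = a)).card =
      (Finset.univ.filter (fun p : Σ a : α, Fin (m a) => p.1 = a)).card := by
    apply Finset.card_bij (fun j _ => e j)
    · intro j hj; simpa using (Finset.mem_filter.mp hj).2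
    · intro j₁ _ j₂ _ hj; exact e.injective hj
    · intro p hp
      exact ⟨e.symm p, by simpa using (Finset.mem_filter.mp hp).2, by simp⟩
  rw [h1, ← Fintype.card_subtype,
    Fintype.card_congr (sigmaFstEquiv (fun a => Fin (m a)) a), Fintype.card_fin]

/-- Quantization: if `φ` is a distribution over subsets of `ℛ` with support of
size at most `β` and `f` takes values in `[0,1]`, then for every positive integer `q` there are
subsets `R_1, …, R_q` (repetitions allowed) whose empirical frequencies are dominated by the
marginals of `φ` and whose average `f`-value is at least the expectation of `f` under `φ`
minus `β / q`. -/
theorem exists_q_uniform_quantization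
    {ℛ : Type*} [Fintype ℛ] [DecidableEq ℛ]
    (f : Finset ℛ → ℝ) (hf : ∀ R, f R ∈ Set.Icc (0 : ℝ) 1)
    (φ : Finset ℛ → ℝ) (hφnn : ∀ R, 0 ≤ φ R) (hφsum : ∑ R : Finset ℛ, φ R = 1)
    (β : ℕ) (hβ : (Finset.univ.filter (fun R : Finset ℛ => φ R ≠ 0)).card ≤ β)
    (q : ℕ) (hq : 0 < q) :
    ∃ R : Fin q → Finset ℛ,
      (∀ r : ℛ, ((Finset.univ.filter (fun j : Fin q => r ∈ R j)).card : ℝ) / q ≤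
        ∑ T ∈ Finset.univ.filter (fun T : Finset ℛ => r ∈ T), φ T) ∧
      ((∑ T : Finset ℛ, φ T * f T) - (β : ℝ) / q ≤ (1 / q : ℝ) * ∑ j : Fin q, f (R j)) := by
  have hq' : (0 : ℝ) < q := by exact_mod_cast hq
  set n : ℕ := ∑ T : Finset ℛ, ⌊(q : ℝ) * φ T⌋₊ with hn
  have hfl : ∀ T, (⌊(q : ℝ) * φ T⌋₊ : ℝ) ≤ (q : ℝ) * φ T := fun T =>
    Nat.floor_le (mul_nonneg (by positivity) (hφnn T))
  have hnq : n ≤ q := by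
    have : (n : ℝ) ≤ (q : ℝ) := by
      rw [hn]
      push_cast
      calc ∑ T : Finset ℛ, ((⌊(q : ℝ) * φ T⌋₊ : ℝ)) ≤ ∑ T : Finset ℛ, (q : ℝ) * φ T :=
            Finset.sum_le_sum fun T _ => hfl T
        _ = q := by rw [← Finset.mul_sum, hφsum, mul_one]
    exact_mod_cast this
  set m : Finset ℛ → ℕ :=
    fun T => ⌊(q : ℝ) * φ T⌋₊ + (if T = ∅ then q - n else 0) with hm
  have hmsum : ∑ T : Finset ℛ, m T = q := by
    rw [hm]
    rw [Finset.sum_add_distrib, Finset.sum_ite_eq' Finset.univ (∅ : Finset ℛ)]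
    simp [← hn, Nat.add_sub_cancel' hnq]
  obtain ⟨R, hR⟩ := exists_fn_fiber_card m q hmsum
  refine ⟨R, fun r => ?_, ?_⟩
  · -- marginal bound
    have hcard : (Finset.univ.filter (fun j : Fin q => r ∈ R j)).card =
        ∑ T ∈ Finset.univ.filter (fun T : Finset ℛ => r ∈ T),
          (Finset.univ.filter (fun j : Fin q => R j = T)).card := by
      rw [Finset.card_eq_sum_card_fiberwise
        (f := R) (t := Finset.univ.filter (fun T : Finset ℛ => r ∈ T))
        (fun j hj => by simp [Finset.mem_filter.mp hj |>.2])]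
      apply Finset.sum_congr rfl
      intro T hT
      have hrT : r ∈ T := (Finset.mem_filter.mp hT).2
      rw [Finset.filter_filter]
      congr 1
      apply Finset.filter_congr
      intro j _
      constructor
      · exact fun h => h.2
      · exact fun h => ⟨h ▸ hrT, h⟩
    rw [div_le_iff₀ hq', hcard]
    push_cast
    calc ∑ T ∈ Finset.univ.filter (fun T : Finset ℛ => r ∈ T),
          ((Finset.univ.filter (fun j : Fin q => R j = T)).card : ℝ)
        ≤ ∑ T ∈ Finset.univ.filter (fun T : Finset ℛ => r ∈ T), (q : ℝ) * φ T := by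
          apply Finset.sum_le_sum
          intro T hT
          have hrT : r ∈ T := (Finset.mem_filter.mp hT).2
          have hTne : T ≠ ∅ := Finset.ne_empty_of_mem hrT
          rw [hR T, hm]
          simp only [hTne, if_false, add_zero, Nat.cast_add]
          simpa using hfl T
      _ = (∑ T ∈ Finset.univ.filter (fun T : Finset ℛ => r ∈ T), φ T) * q := by
          rw [← Finset.mul_sum, mul_comm]
  · -- utility bound
    have hsumf : ∑ j : Fin q, f (R j) = ∑ T : Finset ℛ, (m T : ℝ) * f T := by
      rw [← Finset.sum_fiberwise_of_maps_to (g := R)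
        (t := (Finset.univ : Finset (Finset ℛ))) (fun j _ => Finset.mem_univ _)]
      apply Finset.sum_congr rfl
      intro T _
      rw [Finset.sum_congr rfl
        (fun j hj => by rw [(Finset.mem_filter.mp hj).2] : ∀ j ∈ _, f (R j) = f T)]
      rw [Finset.sum_const, hR T, nsmul_eq_mul]
    have key : ∀ T : Finset ℛ,
        (q : ℝ) * φ T * f T - (if φ T ≠ 0 then (1 : ℝ) else 0) ≤ (m T : ℝ) * f T := by
      intro T
      obtain ⟨hf0, hf1⟩ := hf T
      have hmfl : (⌊(q : ℝ) * φ T⌋₊ : ℝ) ≤ (m T : ℝ) := by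
        rw [hm]; push_cast; simp only [le_add_iff_nonneg_right]; positivity
      by_cases hφT : φ T = 0
      · simp only [hφT, ne_eq, not_true_eq_false, if_false, mul_zero, zero_mul, sub_zero]
        positivity
      · simp only [hφT, ne_eq, not_false_eq_true, if_true]
        have h1 : (q : ℝ) * φ T ≤ (⌊(q : ℝ) * φ T⌋₊ : ℝ) + 1 :=
          le_of_lt (Nat.lt_floor_add_one _)
        have h2 : ((q : ℝ) * φ T) * f T ≤ ((⌊(q : ℝ) * φ T⌋₊ : ℝ) + 1) * f T :=
          mul_le_mul_of_nonneg_right h1 hf0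
        have h3 : (⌊(q : ℝ) * φ T⌋₊ : ℝ) * f T ≤ (m T : ℝ) * f T :=
          mul_le_mul_of_nonneg_right hmfl hf0
        nlinarith
    have hite : ∑ T : Finset ℛ, (if φ T ≠ 0 then (1 : ℝ) else 0) =
        ((Finset.univ.filter (fun T : Finset ℛ => φ T ≠ 0)).card : ℝ) := by
      rw [Finset.card_filter]
      push_cast
      apply Finset.sum_congr rfl
      intro T _
      by_cases h : φ T = 0 <;> simp [h]
    calc (∑ T : Finset ℛ, φ T * f T) - (β : ℝ) / q
        ≤ (1 / q : ℝ) * ((q : ℝ) * (∑ T : Finset ℛ, φ T * f T) - (β : ℝ)) := by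
          rw [mul_sub, one_div, ← mul_assoc, inv_mul_cancel₀ (ne_of_gt hq'), one_mul]
          ring_nf
          rfl
      _ ≤ (1 / q : ℝ) * ∑ j : Fin q, f (R j) := by
          apply mul_le_mul_of_nonneg_left _ (by positivity)
          rw [hsumf]
          have h1 : ∑ T : Finset ℛ, ((q : ℝ) * φ T * f T - (if φ T ≠ 0 then (1:ℝ) else 0))
              ≤ ∑ T : Finset ℛ, (m T : ℝ) * f T := Finset.sum_le_sum fun T _ => key T
          rw [Finset.sum_sub_distrib, hite] at h1
          have h2 : ((Finset.univ.filter (fun T : Finset ℛ => φ T ≠ 0)).card : ℝ) ≤ β := by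
            exact_mod_cast hβ
          calc (q : ℝ) * (∑ T : Finset ℛ, φ T * f T) - (β : ℝ)
              ≤ (q : ℝ) * (∑ T : Finset ℛ, φ T * f T)
                - ((Finset.univ.filter (fun T : Finset ℛ => φ T ≠ 0)).card : ℝ) := by
                linarith
            _ ≤ ∑ T : Finset ℛ, (m T : ℝ) * f T := by
                have hms : (q : ℝ) * (∑ T : Finset ℛ, φ T * f T) =
                    ∑ T : Finset ℛ, (q : ℝ) * φ T * f T := by
                  rw [Finset.mul_sum]
                  exact Finset.sum_congr rfl fun T _ => (mul_assoc _ _ _).symm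
                rw [hms]
                linarith [h1]
end
end

section
/- Let ℛ be a finite set, f : 2^ℛ → ℝ with multilinear extension F, let q be a positive integer, and let x^1, …, x^q ∈ [0,1]^ℛ. Then there exist y^1, …, y^q ∈ [0,1]^ℛ such that: (i) Σ_{j=1}^{q} y^j_r = Σ_{j=1}^{q} x^j_r for every r ∈ ℛ; (ii) for each r ∈ ℛ there is at most one index j with y^j_r ∉ {0,1}; and (iii) Σ_{j=1}^{q} F(y^j) ≥ Σ_{j=1}^{q} F(x^j). -/
open Finset

noncomputable section

/-- The multilinear extension of a set function `f : 2^ℛ → ℝ`. -/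
noncomputable def mlext {ℛ : Type*} [Fintype ℛ] [DecidableEq ℛ]
    (f : Finset ℛ → ℝ) (x : ℛ → ℝ) : ℝ :=
  ∑ R : Finset ℛ, f R * ((∏ r ∈ R, x r) * ∏ r ∈ Rᶜ, (1 - x r))

lemma mlext_update {ℛ : Type*} [Fintype ℛ] [DecidableEq ℛ]
    (f : Finset ℛ → ℝ) (x : ℛ → ℝ) (r : ℛ) (v : ℝ) :
    mlext f (Function.update x r v)
      = (1 - v) * mlext f (Function.update x r 0) + v * mlext f (Function.update x r 1) := by
  unfold mlext
  rw [Finset.mul_sum, Finset.mul_sum, ← Finset.sum_add_distrib]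
  refine Finset.sum_congr rfl fun R _ => ?_
  have hupd : ∀ (w : ℝ) (r' : ℛ), r' ≠ r → Function.update x r w r' = x r' :=
    fun w r' h => Function.update_of_ne h _ _
  by_cases hr : r ∈ R
  · have hP : ∀ w : ℝ, (∏ r' ∈ R, Function.update x r w r') = w * ∏ r' ∈ R.erase r, x r' := by
      intro w
      rw [← Finset.mul_prod_erase R _ hr, Function.update_self]
      congr 1
      exact Finset.prod_congr rfl fun r' hr' => hupd w r' (Finset.ne_of_mem_erase hr')
    have hQ : ∀ w : ℝ, (∏ r' ∈ Rᶜ, (1 - Function.update x r w r')) = ∏ r' ∈ Rᶜ, (1 - x r') := by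
      intro w
      refine Finset.prod_congr rfl fun r' hr' => ?_
      rw [hupd w r' (fun h => (Finset.mem_compl.mp hr') (h ▸ hr))]
    rw [hP, hQ, hP, hQ, hP, hQ]; ring
  · have hrc : r ∈ Rᶜ := Finset.mem_compl.mpr hr
    have hP : ∀ w : ℝ, (∏ r' ∈ R, Function.update x r w r') = ∏ r' ∈ R, x r' := by
      intro w
      exact Finset.prod_congr rfl fun r' hr' => hupd w r' (fun h => hr (h ▸ hr'))
    have hQ : ∀ w : ℝ, (∏ r' ∈ Rᶜ, (1 - Function.update x r w r'))
        = (1 - w) * ∏ r' ∈ Rᶜ.erase r, (1 - x r') := by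
      intro w
      rw [← Finset.mul_prod_erase Rᶜ _ hrc, Function.update_self]
      congr 1
      exact Finset.prod_congr rfl fun r' hr' => by rw [hupd w r' (Finset.ne_of_mem_erase hr')]
    rw [hP, hQ, hP, hQ, hP, hQ]; ring

lemma step_lemma {ℛ : Type*} [Fintype ℛ] [DecidableEq ℛ]
    (f : Finset ℛ → ℝ) (q : ℕ) (x : Fin q → ℛ → ℝ)
    (hx : ∀ j r, x j r ∈ Set.Icc (0 : ℝ) 1)
    (r : ℛ) (j k : Fin q) (hjk : j ≠ k)
    (hj : x j r ≠ 0 ∧ x j r ≠ 1) (hk : x k r ≠ 0 ∧ x k r ≠ 1) :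
    ∃ x' : Fin q → ℛ → ℝ,
      (∀ m r', x' m r' ∈ Set.Icc (0 : ℝ) 1) ∧
      (∀ r', ∑ m : Fin q, x' m r' = ∑ m : Fin q, x m r') ∧
      (Finset.univ.filter (fun p : Fin q × ℛ => x' p.1 p.2 ≠ 0 ∧ x' p.1 p.2 ≠ 1))
        ⊂ (Finset.univ.filter (fun p : Fin q × ℛ => x p.1 p.2 ≠ 0 ∧ x p.1 p.2 ≠ 1)) ∧
      (∑ m : Fin q, mlext f (x m) ≤ ∑ m : Fin q, mlext f (x' m)) := by
  classical
  set c := x j r with hc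
  set d := x k r with hd
  have hc0 : 0 < c := lt_of_le_of_ne (hx j r).1 (Ne.symm hj.1)
  have hc1 : c < 1 := lt_of_le_of_ne (hx j r).2 hj.2
  have hd0 : 0 < d := lt_of_le_of_ne (hx k r).1 (Ne.symm hk.1)
  have hd1 : d < 1 := lt_of_le_of_ne (hx k r).2 hk.2
  have hkj : k ≠ j := hjk.symm
  have hkmem : k ∈ Finset.univ.erase j := Finset.mem_erase.mpr ⟨hkj, Finset.mem_univ k⟩
  set X : ℝ → Fin q → ℛ → ℝ := fun s m =>
    if m = j then Function.update (x j) r (c + s)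
    else if m = k then Function.update (x k) r (d - s)
    else x m with hX
  have hXj : ∀ s, X s j = Function.update (x j) r (c + s) := by intro s; simp [hX]
  have hXk : ∀ s, X s k = Function.update (x k) r (d - s) := by intro s; simp [hX, hkj]
  have hXm : ∀ s m, m ≠ j → m ≠ k → X s m = x m := by
    intro s m h1 h2; simp [hX, h1, h2]
  set A0 := mlext f (Function.update (x j) r 0) with hA0
  set A1 := mlext f (Function.update (x j) r 1) with hA1
  set B0 := mlext f (Function.update (x k) r 0) with hB0
  set B1 := mlext f (Function.update (x k) r 1) with hB1
  set C := ∑ m ∈ (Finset.univ.erase j).erase k, mlext f (x m) with hC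
  have hdecomp : ∀ g : Fin q → ℝ, ∑ m : Fin q, g m
      = g j + (g k + ∑ m ∈ (Finset.univ.erase j).erase k, g m) := by
    intro g
    rw [← Finset.add_sum_erase _ g (Finset.mem_univ j), ← Finset.add_sum_erase _ g hkmem]
  have hXsum : ∀ s, ∑ m : Fin q, mlext f (X s m)
      = ((1 - (c + s)) * A0 + (c + s) * A1) + (((1 - (d - s)) * B0 + (d - s) * B1) + C) := by
    intro s
    rw [hdecomp (fun m => mlext f (X s m))]
    have h3 : ∑ m ∈ (Finset.univ.erase j).erase k, mlext f (X s m) = C := by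
      refine Finset.sum_congr rfl fun m hm => ?_
      rw [hXm s m (Finset.ne_of_mem_erase (Finset.mem_of_mem_erase hm))
        (Finset.ne_of_mem_erase hm)]
    rw [hXj, hXk, h3, mlext_update f (x j) r (c + s), mlext_update f (x k) r (d - s),
      ← hA0, ← hA1, ← hB0, ← hB1]
  have hbase : ∑ m : Fin q, mlext f (x m)
      = ((1 - c) * A0 + c * A1) + (((1 - d) * B0 + d * B1) + C) := by
    rw [hdecomp (fun m => mlext f (x m))]
    have hxj : x j = Function.update (x j) r c := (Function.update_eq_self r (x j)).symm
    have hxk : x k = Function.update (x k) r d := (Function.update_eq_self r (x k)).symm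
    rw [show mlext f (x j) = mlext f (Function.update (x j) r c) by rw [← hxj],
        show mlext f (x k) = mlext f (Function.update (x k) r d) by rw [← hxk],
        mlext_update f (x j) r c, mlext_update f (x k) r d, ← hA0, ← hA1, ← hB0, ← hB1]
  set β : ℝ := (A1 - A0) - (B1 - B0) with hβ
  have hdiff : ∀ s, ∑ m : Fin q, mlext f (X s m) = (∑ m : Fin q, mlext f (x m)) + s * β := by
    intro s; rw [hXsum, hbase]; ring
  -- generic conclusion builder
  have key : ∀ s : ℝ, 0 ≤ c + s → c + s ≤ 1 → 0 ≤ d - s → d - s ≤ 1 →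
      ((c + s = 0 ∨ c + s = 1) ∨ (d - s = 0 ∨ d - s = 1)) → 0 ≤ s * β →
      ∃ x' : Fin q → ℛ → ℝ,
      (∀ m r', x' m r' ∈ Set.Icc (0 : ℝ) 1) ∧
      (∀ r', ∑ m : Fin q, x' m r' = ∑ m : Fin q, x m r') ∧
      (Finset.univ.filter (fun p : Fin q × ℛ => x' p.1 p.2 ≠ 0 ∧ x' p.1 p.2 ≠ 1))
        ⊂ (Finset.univ.filter (fun p : Fin q × ℛ => x p.1 p.2 ≠ 0 ∧ x p.1 p.2 ≠ 1)) ∧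
      (∑ m : Fin q, mlext f (x m) ≤ ∑ m : Fin q, mlext f (x' m)) := by
    intro s h1 h2 h3 h4 hb hg
    have hXval : ∀ m r', X s m r' ∈ Set.Icc (0 : ℝ) 1 := by
      intro m r'
      by_cases hm : m = j
      · rw [hm, hXj, Function.update_apply]
        split_ifs with hr
        · exact ⟨h1, h2⟩
        · exact hx j r'
      · by_cases hm' : m = k
        · rw [hm', hXk, Function.update_apply]
          split_ifs with hr
          · exact ⟨h3, h4⟩
          · exact hx k r'
        · rw [hXm s m hm hm']; exact hx m r'
    refine ⟨X s, hXval, ?_, ?_, ?_⟩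
    · intro r'
      rcases eq_or_ne r' r with hr | hr
      · rw [hr]
        rw [hdecomp (fun m => X s m r), hdecomp (fun m => x m r)]
        have h5 : ∑ m ∈ (Finset.univ.erase j).erase k, X s m r
            = ∑ m ∈ (Finset.univ.erase j).erase k, x m r := by
          refine Finset.sum_congr rfl fun m hm => ?_
          rw [hXm s m (Finset.ne_of_mem_erase (Finset.mem_of_mem_erase hm))
            (Finset.ne_of_mem_erase hm)]
        rw [hXj, hXk, h5, Function.update_self, Function.update_self, ← hc, ← hd]
        ring
      · refine Finset.sum_congr rfl fun m _ => ?_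
        by_cases hm : m = j
        · subst hm; rw [hXj, Function.update_of_ne hr]
        · by_cases hm' : m = k
          · subst hm'; rw [hXk, Function.update_of_ne hr]
          · rw [hXm s m hm hm']
    · have hsub : (Finset.univ.filter (fun p : Fin q × ℛ => X s p.1 p.2 ≠ 0 ∧ X s p.1 p.2 ≠ 1))
          ⊆ (Finset.univ.filter (fun p : Fin q × ℛ => x p.1 p.2 ≠ 0 ∧ x p.1 p.2 ≠ 1)) := by
        intro p hp
        rw [Finset.mem_filter] at hp ⊢
        refine ⟨Finset.mem_univ p, ?_⟩
        obtain ⟨-, hp⟩ := hp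
        by_cases hm : p.1 = j
        · rcases eq_or_ne p.2 r with hr | hr
          · rw [hm, hr]; exact hj
          · rw [hm, hXj, Function.update_of_ne hr] at hp; rw [hm]; exact hp
        · by_cases hm' : p.1 = k
          · rcases eq_or_ne p.2 r with hr | hr
            · rw [hm', hr]; exact hk
            · rw [hm', hXk, Function.update_of_ne hr] at hp; rw [hm']; exact hp
          · rw [hXm s p.1 hm hm'] at hp; exact hp
      rw [Finset.ssubset_iff_of_subset hsub]
      rcases hb with hb | hb
      · refine ⟨(j, r), Finset.mem_filter.mpr ⟨Finset.mem_univ _, hj⟩, ?_⟩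
        rw [Finset.mem_filter]
        push_neg
        intro _
        simp only [hXj, Function.update_self]
        rcases hb with hb | hb
        · intro h; exact absurd hb h
        · intro _; exact hb
      · refine ⟨(k, r), Finset.mem_filter.mpr ⟨Finset.mem_univ _, hk⟩, ?_⟩
        rw [Finset.mem_filter]
        push_neg
        intro _
        simp only [hXk, Function.update_self]
        rcases hb with hb | hb
        · intro h; exact absurd hb h
        · intro _; exact hb
    · rw [hdiff s]; linarith
  by_cases hβ0 : 0 ≤ β
  · set s := min (1 - c) d with hs
    have hs0 : 0 ≤ s := le_min (by linarith) (le_of_lt hd0)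
    have hs1 : s ≤ 1 - c := min_le_left _ _
    have hs2 : s ≤ d := min_le_right _ _
    refine key s (by linarith) (by linarith) (by linarith) (by linarith) ?_
      (mul_nonneg hs0 hβ0)
    rcases min_le_iff.mp (le_refl s) with _ | _
    · rcases le_total (1 - c) d with h | h
      · left; right; rw [hs, min_eq_left h]; ring
      · right; left; rw [hs, min_eq_right h]; ring
    · rcases le_total (1 - c) d with h | h
      · left; right; rw [hs, min_eq_left h]; ring
      · right; left; rw [hs, min_eq_right h]; ring
  · push_neg at hβ0
    set s := -(min c (1 - d)) with hs
    have hs0 : s ≤ 0 := neg_nonpos.mpr (le_min (le_of_lt hc0) (by linarith))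
    have hs1 : -s ≤ c := by rw [hs]; simp [min_le_left]
    have hs2 : -s ≤ 1 - d := by rw [hs]; simp [min_le_right]
    refine key s (by linarith) (by linarith) (by linarith) (by linarith) ?_
      (by nlinarith)
    rcases le_total c (1 - d) with h | h
    · left; left; rw [hs, min_eq_left h]; ring
    · right; right; rw [hs, min_eq_right h]; ring

lemma round_aux {ℛ : Type*} [Fintype ℛ] [DecidableEq ℛ]
    (f : Finset ℛ → ℝ) (q : ℕ) (N : ℕ) :
    ∀ x : Fin q → ℛ → ℝ, (∀ j r, x j r ∈ Set.Icc (0 : ℝ) 1) →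
    (Finset.univ.filter (fun p : Fin q × ℛ => x p.1 p.2 ≠ 0 ∧ x p.1 p.2 ≠ 1)).card ≤ N →
    ∃ y : Fin q → ℛ → ℝ,
      (∀ j r, y j r ∈ Set.Icc (0 : ℝ) 1) ∧
      (∀ r : ℛ, ∑ j : Fin q, y j r = ∑ j : Fin q, x j r) ∧
      (∀ r : ℛ,
        (Finset.univ.filter (fun j : Fin q => y j r ≠ 0 ∧ y j r ≠ 1)).card ≤ 1) ∧
      (∑ j : Fin q, mlext f (x j) ≤ ∑ j : Fin q, mlext f (y j)) := by
  induction N with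
  | zero =>
    intro x hx hcard
    by_cases hgood : ∀ r : ℛ,
        (Finset.univ.filter (fun j : Fin q => x j r ≠ 0 ∧ x j r ≠ 1)).card ≤ 1
    · exact ⟨x, hx, fun r => rfl, hgood, le_refl _⟩
    · push_neg at hgood
      obtain ⟨r, hr⟩ := hgood
      obtain ⟨j, hj, k, hk, hjk⟩ := Finset.one_lt_card.mp hr
      exfalso
      have hmem : (j, r) ∈ Finset.univ.filter
          (fun p : Fin q × ℛ => x p.1 p.2 ≠ 0 ∧ x p.1 p.2 ≠ 1) :=
        Finset.mem_filter.mpr ⟨Finset.mem_univ _, (Finset.mem_filter.mp hj).2⟩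
      have := Finset.card_pos.mpr ⟨_, hmem⟩
      omega
  | succ N ih =>
    intro x hx hcard
    by_cases hgood : ∀ r : ℛ,
        (Finset.univ.filter (fun j : Fin q => x j r ≠ 0 ∧ x j r ≠ 1)).card ≤ 1
    · exact ⟨x, hx, fun r => rfl, hgood, le_refl _⟩
    · push_neg at hgood
      obtain ⟨r, hr⟩ := hgood
      obtain ⟨j, hj, k, hk, hjk⟩ := Finset.one_lt_card.mp hr
      obtain ⟨x', hx', hsum', hss, hval⟩ := step_lemma f q x hx r j k hjk
        (Finset.mem_filter.mp hj).2 (Finset.mem_filter.mp hk).2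
      have hcard' : (Finset.univ.filter
          (fun p : Fin q × ℛ => x' p.1 p.2 ≠ 0 ∧ x' p.1 p.2 ≠ 1)).card ≤ N := by
        have := Finset.card_lt_card hss
        omega
      obtain ⟨y, h1, h2, h3, h4⟩ := ih x' hx' hcard'
      exact ⟨y, h1, fun r' => (h2 r').trans (hsum' r'), h3, le_trans hval h4⟩

/-- Column-wise rebalancing: given `x^1, …, x^q ∈ [0,1]^ℛ`, there are
`y^1, …, y^q ∈ [0,1]^ℛ` preserving per-coordinate sums, with at most one non-binary entry per
coordinate, and with total multilinear value at least as large. -/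
theorem exists_rounded_vectors
    {ℛ : Type*} [Fintype ℛ] [DecidableEq ℛ]
    (f : Finset ℛ → ℝ) (q : ℕ) (hq : 0 < q)
    (x : Fin q → ℛ → ℝ) (hx : ∀ j r, x j r ∈ Set.Icc (0 : ℝ) 1) :
    ∃ y : Fin q → ℛ → ℝ,
      (∀ j r, y j r ∈ Set.Icc (0 : ℝ) 1) ∧
      (∀ r : ℛ, ∑ j : Fin q, y j r = ∑ j : Fin q, x j r) ∧
      (∀ r : ℛ,
        (Finset.univ.filter (fun j : Fin q => y j r ≠ 0 ∧ y j r ≠ 1)).card ≤ 1) ∧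
      (∑ j : Fin q, mlext f (x j) ≤ ∑ j : Fin q, mlext f (y j)) := by
  exact round_aux f q _ x hx (le_refl _)
end
end

section
/- Let ℛ be a finite set with |ℛ| = n, f : 2^ℛ → [0,1] with multilinear extension F, and let y^1, …, y^q ∈ [0,1]^ℛ be such that for each r ∈ ℛ at most one index j has y^j_r ∉ {0,1}. Let Q := {j : y^j ∈ {0,1}^ℛ} and, for j ∈ Q, R_j := {r : y^j_r = 1}. Then |Q| ≥ q − n, and the nonnegative weights φ(R) := |{j ∈ Q : R_j = R}| / q (which sum to at most 1 over R ⊆ ℛ) satisfy: (i) Σ_{R ∋ r} φ(R) ≤ (1/q) Σ_{j=1}^{q} y^j_r for every r ∈ ℛ; and (ii) Σ_{R⊆ℛ} φ(R) f(R) ≥ (1/q) Σ_{j=1}^{q} F(y^j) − n/q. -/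
open Finset

noncomputable section

/-- The set `Q` of indices `j` whose vector `y j` is binary. -/
noncomputable def binIdx {ℛ : Type*} [Fintype ℛ] {q : ℕ}
    (y : Fin q → ℛ → ℝ) : Finset (Fin q) :=
  Finset.univ.filter (fun j : Fin q => ∀ r : ℛ, y j r = 0 ∨ y j r = 1)

/-- The subset `R_j = {r : y j r = 1}` associated with index `j`. -/
noncomputable def oneSet {ℛ : Type*} [Fintype ℛ] {q : ℕ}
    (y : Fin q → ℛ → ℝ) (j : Fin q) : Finset ℛ :=
  Finset.univ.filter (fun r : ℛ => y j r = 1)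

/-- The weights `φ(R) = |{j ∈ Q : R_j = R}| / q`. -/
noncomputable def extractWeight {ℛ : Type*} [Fintype ℛ] [DecidableEq ℛ] {q : ℕ}
    (y : Fin q → ℛ → ℝ) (R : Finset ℛ) : ℝ :=
  (((binIdx y).filter (fun j : Fin q => oneSet y j = R)).card : ℝ) / q

lemma sum_prods_eq_one {ℛ : Type*} [Fintype ℛ] [DecidableEq ℛ] (x : ℛ → ℝ) :
    ∑ R : Finset ℛ, ((∏ r ∈ R, x r) * ∏ r ∈ Rᶜ, (1 - x r)) = 1 := by
  have h := Finset.prod_add x (fun r => 1 - x r) (Finset.univ : Finset ℛ)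
  have h1 : ∏ r : ℛ, (x r + (1 - x r)) = 1 := by
    rw [Finset.prod_congr rfl (fun r _ => by ring : ∀ r ∈ Finset.univ, x r + (1 - x r) = 1)]
    simp
  rw [h1, Finset.powerset_univ] at h
  calc ∑ R : Finset ℛ, ((∏ r ∈ R, x r) * ∏ r ∈ Rᶜ, (1 - x r))
      = ∑ t : Finset ℛ, (∏ i ∈ t, x i) * ∏ i ∈ Finset.univ \ t, (1 - x i) :=
        Finset.sum_congr rfl fun R _ => by rw [Finset.compl_eq_univ_sdiff]
    _ = 1 := h.symm

lemma prods_nonneg {ℛ : Type*} [Fintype ℛ] [DecidableEq ℛ] {x : ℛ → ℝ}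
    (hx : ∀ r, x r ∈ Set.Icc (0 : ℝ) 1) (R : Finset ℛ) :
    0 ≤ (∏ r ∈ R, x r) * ∏ r ∈ Rᶜ, (1 - x r) :=
  mul_nonneg (Finset.prod_nonneg fun r _ => (hx r).1)
    (Finset.prod_nonneg fun r _ => by linarith [(hx r).2])

lemma mlext_le_one {ℛ : Type*} [Fintype ℛ] [DecidableEq ℛ]
    (f : Finset ℛ → ℝ) (hf : ∀ R, f R ∈ Set.Icc (0 : ℝ) 1) {x : ℛ → ℝ}
    (hx : ∀ r, x r ∈ Set.Icc (0 : ℝ) 1) : mlext f x ≤ 1 := by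
  unfold mlext
  calc ∑ R : Finset ℛ, f R * ((∏ r ∈ R, x r) * ∏ r ∈ Rᶜ, (1 - x r))
      ≤ ∑ R : Finset ℛ, ((∏ r ∈ R, x r) * ∏ r ∈ Rᶜ, (1 - x r)) :=
        Finset.sum_le_sum fun R _ =>
          mul_le_of_le_one_left (prods_nonneg hx R) (hf R).2
    _ = 1 := sum_prods_eq_one x

lemma mlext_nonneg {ℛ : Type*} [Fintype ℛ] [DecidableEq ℛ]
    (f : Finset ℛ → ℝ) (hf : ∀ R, f R ∈ Set.Icc (0 : ℝ) 1) {x : ℛ → ℝ}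
    (hx : ∀ r, x r ∈ Set.Icc (0 : ℝ) 1) : 0 ≤ mlext f x :=
  Finset.sum_nonneg fun R _ => mul_nonneg (hf R).1 (prods_nonneg hx R)

lemma mlext_binary {ℛ : Type*} [Fintype ℛ] [DecidableEq ℛ] {q : ℕ}
    (f : Finset ℛ → ℝ) (y : Fin q → ℛ → ℝ) (j : Fin q)
    (hj : ∀ r, y j r = 0 ∨ y j r = 1) :
    mlext f (y j) = f (oneSet y j) := by
  unfold mlext
  rw [Finset.sum_eq_single (oneSet y j)]
  · have h1 : ∏ r ∈ oneSet y j, y j r = 1 :=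
      Finset.prod_eq_one fun r hr => (Finset.mem_filter.mp hr).2
    have h2 : ∏ r ∈ (oneSet y j)ᶜ, (1 - y j r) = 1 := by
      apply Finset.prod_eq_one
      intro r hr
      have hne : y j r ≠ 1 := by
        intro h
        exact (Finset.mem_compl.mp hr)
          (Finset.mem_filter.mpr ⟨Finset.mem_univ r, h⟩)
      rcases hj r with h | h
      · rw [h]; ring
      · exact absurd h hne
    rw [h1, h2]; ring
  · intro R _ hR
    by_cases hsub : R ⊆ oneSet y j
    · have hns : ¬oneSet y j ⊆ R := fun h => hR (Finset.Subset.antisymm hsub h)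
      obtain ⟨r, hr1, hr2⟩ := Finset.not_subset.mp hns
      have hy : y j r = 1 := (Finset.mem_filter.mp hr1).2
      have : ∏ r ∈ Rᶜ, (1 - y j r) = 0 :=
        Finset.prod_eq_zero (Finset.mem_compl.mpr hr2) (by rw [hy]; ring)
      rw [this]; ring
    · obtain ⟨r, hr1, hr2⟩ := Finset.not_subset.mp hsub
      have hy : y j r = 0 := by
        rcases hj r with h | h
        · exact h
        · exact absurd (Finset.mem_filter.mpr ⟨Finset.mem_univ r, h⟩) hr2
      have : ∏ r ∈ R, y j r = 0 := Finset.prod_eq_zero hr1 hy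
      rw [this]; ring
  · intro h; exact absurd (Finset.mem_univ _) h

/-- Extraction: from near-binary vectors `y^1, …, y^q ∈ [0,1]^ℛ` (at most one
non-binary entry per coordinate), the weights `φ(R) = |{j ∈ Q : R_j = R}| / q` form a
subdistribution with `|Q| ≥ q − n`, marginals dominated by the averages `(1/q) Σ_j y^j_r`, and
expected `f`-value at least the average multilinear value minus `n / q`. -/
theorem extraction_of_near_binary_vectors
    {ℛ : Type*} [Fintype ℛ] [DecidableEq ℛ]
    (f : Finset ℛ → ℝ) (hf : ∀ R, f R ∈ Set.Icc (0 : ℝ) 1)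
    (n q : ℕ) (hn : n = Fintype.card ℛ) (hq : 0 < q)
    (y : Fin q → ℛ → ℝ) (hy01 : ∀ j r, y j r ∈ Set.Icc (0 : ℝ) 1)
    (hbin : ∀ r : ℛ,
      (Finset.univ.filter (fun j : Fin q => y j r ≠ 0 ∧ y j r ≠ 1)).card ≤ 1) :
    ((q : ℝ) - n ≤ ((binIdx y).card : ℝ)) ∧
    (∀ R : Finset ℛ, 0 ≤ extractWeight y R) ∧
    (∑ R : Finset ℛ, extractWeight y R ≤ 1) ∧
    (∀ r : ℛ,
      ∑ R ∈ Finset.univ.filter (fun R : Finset ℛ => r ∈ R), extractWeight y R ≤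
        (1 / q : ℝ) * ∑ j : Fin q, y j r) ∧
    ((1 / q : ℝ) * (∑ j : Fin q, mlext f (y j)) - (n : ℝ) / q ≤
      ∑ R : Finset ℛ, extractWeight y R * f R) := by
  have hq' : (0 : ℝ) < q := by exact_mod_cast hq
  -- Part 1: card of complement of binIdx is at most n
  have hcompl : ((binIdx y)ᶜ.card : ℝ) ≤ n := by
    rcases Finset.eq_empty_or_nonempty ((binIdx y)ᶜ) with he | hne
    · rw [he]; simp
    · have hwit : ∀ j ∈ (binIdx y)ᶜ, ∃ r : ℛ, y j r ≠ 0 ∧ y j r ≠ 1 := by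
        intro j hj
        have : ¬∀ r : ℛ, y j r = 0 ∨ y j r = 1 := by
          intro h
          exact (Finset.mem_compl.mp hj)
            (Finset.mem_filter.mpr ⟨Finset.mem_univ j, h⟩)
        push_neg at this
        obtain ⟨r, hr⟩ := this
        exact ⟨r, hr⟩
      choose g hg using hwit
      obtain ⟨j0, hj0⟩ := hne
      haveI : Inhabited ℛ := ⟨g j0 hj0⟩
      have hle : (binIdx y)ᶜ.card ≤ Fintype.card ℛ := by
        rw [← Finset.card_univ]
        apply Finset.card_le_card_of_injOn
          (fun j => if h : j ∈ (binIdx y)ᶜ then g j h else default)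
          (fun _ _ => Finset.mem_univ _)
        intro j1 h1 j2 h2 heq
        simp only [Finset.mem_coe] at h1 h2
        simp only [dif_pos h1, dif_pos h2] at heq
        set r := g j1 h1 with hr
        have m1 : j1 ∈ Finset.univ.filter (fun j : Fin q => y j r ≠ 0 ∧ y j r ≠ 1) :=
          Finset.mem_filter.mpr ⟨Finset.mem_univ _, hg j1 h1⟩
        have m2 : j2 ∈ Finset.univ.filter (fun j : Fin q => y j r ≠ 0 ∧ y j r ≠ 1) :=
          Finset.mem_filter.mpr ⟨Finset.mem_univ _, heq ▸ hg j2 h2⟩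
        exact Finset.card_le_one.mp (hbin r) j1 m1 j2 m2
      rw [hn]
      exact_mod_cast hle
  have hQcard : ((binIdx y).card : ℝ) + ((binIdx y)ᶜ.card : ℝ) = q := by
    have := Finset.card_add_card_compl (binIdx y)
    rw [Fintype.card_fin] at this
    exact_mod_cast this
  have part1 : (q : ℝ) - n ≤ ((binIdx y).card : ℝ) := by linarith
  refine ⟨part1, ?_, ?_, ?_, ?_⟩
  · intro R
    unfold extractWeight
    positivity
  · -- sum of weights = |Q|/q ≤ 1
    have hfib : (binIdx y).card =
        ∑ R : Finset ℛ, ((binIdx y).filter (fun j => oneSet y j = R)).card :=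
      Finset.card_eq_sum_card_fiberwise (fun j _ => Finset.mem_univ (oneSet y j))
    have : ∑ R : Finset ℛ, extractWeight y R = ((binIdx y).card : ℝ) / q := by
      unfold extractWeight
      rw [← Finset.sum_div, hfib]
      push_cast
      ring
    rw [this, div_le_one hq']
    have := Finset.card_le_univ (binIdx y)
    simp only [Finset.card_univ, Fintype.card_fin] at this
    exact_mod_cast this
  · -- marginals
    intro r
    have hfib : ((binIdx y).filter (fun j => r ∈ oneSet y j)).card =
        ∑ R ∈ Finset.univ.filter (fun R : Finset ℛ => r ∈ R),
          (((binIdx y).filter (fun j => r ∈ oneSet y j)).filter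
            (fun j => oneSet y j = R)).card :=
      Finset.card_eq_sum_card_fiberwise (fun j hj =>
        Finset.mem_filter.mpr ⟨Finset.mem_univ _, (Finset.mem_filter.mp hj).2⟩)
    have hfib2 : ∀ R ∈ Finset.univ.filter (fun R : Finset ℛ => r ∈ R),
        ((binIdx y).filter (fun j => oneSet y j = R)) =
        (((binIdx y).filter (fun j => r ∈ oneSet y j)).filter
            (fun j => oneSet y j = R)) := by
      intro R hR
      have hrR : r ∈ R := (Finset.mem_filter.mp hR).2
      ext j
      simp only [Finset.mem_filter]
      constructor
      · rintro ⟨hj, he⟩; exact ⟨⟨hj, he ▸ hrR⟩, he⟩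
      · rintro ⟨⟨hj, _⟩, he⟩; exact ⟨hj, he⟩
    have key : ∑ R ∈ Finset.univ.filter (fun R : Finset ℛ => r ∈ R), extractWeight y R
        = (((binIdx y).filter (fun j => r ∈ oneSet y j)).card : ℝ) / q := by
      unfold extractWeight
      rw [← Finset.sum_div, hfib]
      push_cast
      rw [Finset.sum_congr rfl fun R hR => by rw [hfib2 R hR]]
    rw [key]
    have hub : (((binIdx y).filter (fun j => r ∈ oneSet y j)).card : ℝ)
        ≤ ∑ j : Fin q, y j r := by
      rw [Finset.cast_card]
      calc ∑ j ∈ (binIdx y).filter (fun j => r ∈ oneSet y j), (1 : ℝ)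
          = ∑ j ∈ (binIdx y).filter (fun j => r ∈ oneSet y j), y j r := by
            apply Finset.sum_congr rfl
            intro j hj
            exact ((Finset.mem_filter.mp ((Finset.mem_filter.mp hj).2)).2).symm
        _ ≤ ∑ j : Fin q, y j r :=
            Finset.sum_le_sum_of_subset_of_nonneg (Finset.subset_univ _)
              (fun j _ _ => (hy01 j r).1)
    rw [div_le_iff₀ hq', one_div, mul_comm ((q:ℝ)⁻¹), mul_assoc, inv_mul_cancel₀ (ne_of_gt hq'), mul_one]
    exact hub
  · -- main inequality
    have hsplit : ∑ j : Fin q, mlext f (y j) =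
        ∑ j ∈ binIdx y, mlext f (y j) + ∑ j ∈ (binIdx y)ᶜ, mlext f (y j) :=
      (Finset.sum_add_sum_compl _ _).symm
    have hbinval : ∑ j ∈ binIdx y, mlext f (y j) =
        ∑ R : Finset ℛ, (((binIdx y).filter (fun j => oneSet y j = R)).card : ℝ) * f R := by
      rw [← Finset.sum_fiberwise_of_maps_to (g := oneSet y) (t := Finset.univ)
        (fun j _ => Finset.mem_univ _)]
      apply Finset.sum_congr rfl
      intro R _
      rw [Finset.cast_card, Finset.sum_mul, one_mul]
      apply Finset.sum_congr rfl
      intro j hj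
      obtain ⟨hj1, hj2⟩ := Finset.mem_filter.mp hj
      rw [mlext_binary f y j (Finset.mem_filter.mp hj1).2, hj2]
    have hcomplval : ∑ j ∈ (binIdx y)ᶜ, mlext f (y j) ≤ n := by
      calc ∑ j ∈ (binIdx y)ᶜ, mlext f (y j)
          ≤ ∑ j ∈ (binIdx y)ᶜ, (1 : ℝ) :=
            Finset.sum_le_sum fun j _ => mlext_le_one f hf (hy01 j)
        _ = ((binIdx y)ᶜ.card : ℝ) := by rw [Finset.sum_const, nsmul_eq_mul, mul_one]
        _ ≤ n := hcompl
    have hW : ∑ R : Finset ℛ, extractWeight y R * f R =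
        (1 / q) * ∑ R : Finset ℛ,
          (((binIdx y).filter (fun j => oneSet y j = R)).card : ℝ) * f R := by
      unfold extractWeight
      rw [Finset.mul_sum]
      apply Finset.sum_congr rfl
      intro R _
      ring
    rw [hW, hsplit]
    have := hcomplval
    rw [hbinval]
    set S := ∑ R : Finset ℛ,
      (((binIdx y).filter (fun j => oneSet y j = R)).card : ℝ) * f R
    have h1q : (0:ℝ) < 1 / q := by positivity
    calc (1 / q : ℝ) * (S + ∑ j ∈ (binIdx y)ᶜ, mlext f (y j)) - n / q
        ≤ (1 / q : ℝ) * (S + n) - n / q := by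
          apply sub_le_sub_right
          apply mul_le_mul_of_nonneg_left _ (le_of_lt h1q)
          linarith
      _ = (1 / q : ℝ) * S := by field_simp; ring
end
end

section
/- Let ℛ be a finite set and f : 2^ℛ → ℝ submodular. Then for all x, y ∈ [0,1]^ℛ with x_{r'} ≤ y_{r'} for every r' ∈ ℛ, and every r ∈ ℛ: D_r f(x) ≥ D_r f(y). That is, the partial derivatives of the multilinear extension of a submodular function are coordinatewise non-increasing. -/
open Finset

noncomputable section

/-- The marginal coefficient `D_r f(x)` (the partial derivative of the multilinear extension of
`f` with respect to `x r`; an expression not involving `x r`). -/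
noncomputable def mlderiv {ℛ : Type*} [Fintype ℛ] [DecidableEq ℛ]
    (f : Finset ℛ → ℝ) (r : ℛ) (x : ℛ → ℝ) : ℝ :=
  ∑ R ∈ (Finset.univ.erase r).powerset,
    (f (insert r R) - f R) *
      ((∏ r' ∈ R, x r') * ∏ r' ∈ (Finset.univ.erase r) \ R, (1 - x r'))

lemma mlderiv_split {ℛ : Type*} [Fintype ℛ] [DecidableEq ℛ]
    (f : Finset ℛ → ℝ) (r s : ℛ) (hs : s ≠ r) (z : ℛ → ℝ) :
    mlderiv f r z =
      ∑ R ∈ (((Finset.univ.erase r).erase s)).powerset,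
        ((f (insert r R) - f R) *
          ((∏ r' ∈ R, z r') * ((1 - z s) * ∏ r' ∈ ((Finset.univ.erase r).erase s) \ R, (1 - z r')))
        + (f (insert r (insert s R)) - f (insert s R)) *
          ((z s * ∏ r' ∈ R, z r') * ∏ r' ∈ ((Finset.univ.erase r).erase s) \ R, (1 - z r'))) := by
  set T := (Finset.univ.erase r).erase s with hT
  have hsT : s ∉ T := Finset.notMem_erase _ _
  have hins : Finset.univ.erase r = insert s T := by
    rw [hT, Finset.insert_erase (Finset.mem_erase.2 ⟨hs, Finset.mem_univ s⟩)]
  unfold mlderiv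
  rw [hins, Finset.sum_powerset_insert hsT, ← Finset.sum_add_distrib]
  apply Finset.sum_congr rfl
  intro R hR
  rw [Finset.mem_powerset] at hR
  have hsR : s ∉ R := fun h => hsT (hR h)
  have h1 : insert s T \ R = insert s (T \ R) := Finset.insert_sdiff_of_notMem _ hsR
  have h2 : insert s T \ insert s R = T \ R := by
    ext i; simp only [Finset.mem_sdiff, Finset.mem_insert]
    constructor
    · rintro ⟨h3 | h3, h4⟩
      · exact absurd (Or.inl h3) h4
      · exact ⟨h3, fun h5 => h4 (Or.inr h5)⟩
    · rintro ⟨h3, h4⟩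
      exact ⟨Or.inr h3, fun h5 => h5.elim (fun h6 => hsT (h6 ▸ h3)) h4⟩
  rw [h1, h2, Finset.prod_insert (fun h => hsT (Finset.mem_sdiff.1 h).1),
    Finset.prod_insert hsR]

lemma mlderiv_key {ℛ : Type*} [Fintype ℛ] [DecidableEq ℛ]
    (f : Finset ℛ → ℝ)
    (hf : ∀ R R' : Finset ℛ, f (R ∪ R') + f (R ∩ R') ≤ f R + f R')
    (z : ℛ → ℝ) (hz : ∀ i, z i ∈ Set.Icc (0:ℝ) 1) (r s : ℛ) (hs : s ≠ r)
    (a b : ℝ) (ha : a ∈ Set.Icc (0:ℝ) 1) (hb : b ∈ Set.Icc (0:ℝ) 1) (hab : a ≤ b) :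
    mlderiv f r (Function.update z s b) ≤ mlderiv f r (Function.update z s a) := by
  rw [mlderiv_split f r s hs, mlderiv_split f r s hs]
  apply Finset.sum_le_sum
  intro R hR
  rw [Finset.mem_powerset] at hR
  have hsR : s ∉ R := fun h => Finset.notMem_erase s _ (hR h)
  have hrR : r ∉ R := fun h => Finset.notMem_erase r _ (Finset.mem_of_mem_erase (hR h))
  -- products don't involve s
  have hprod1 : ∀ c : ℝ, ∏ r' ∈ R, Function.update z s c r' = ∏ r' ∈ R, z r' := by
    intro c; apply Finset.prod_congr rfl
    intro i hi; exact Function.update_of_ne (fun h => hsR (by rw [← h]; exact hi)) _ _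
  have hprod2 : ∀ c : ℝ, ∏ r' ∈ ((Finset.univ.erase r).erase s) \ R, (1 - Function.update z s c r')
      = ∏ r' ∈ ((Finset.univ.erase r).erase s) \ R, (1 - z r') := by
    intro c; apply Finset.prod_congr rfl
    intro i hi
    have : i ≠ s := fun h => Finset.notMem_erase s _ (h ▸ (Finset.mem_sdiff.1 hi).1)
    rw [Function.update_of_ne this]
  rw [hprod1, hprod1, hprod2, hprod2, Function.update_self, Function.update_self]
  set P := ∏ r' ∈ R, z r' with hP
  set Q := ∏ r' ∈ ((Finset.univ.erase r).erase s) \ R, (1 - z r') with hQ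
  have hPpos : 0 ≤ P := Finset.prod_nonneg fun i _ => (hz i).1
  have hQpos : 0 ≤ Q := Finset.prod_nonneg fun i hi => by linarith [(hz i).2]
  have hAB : f (insert r (insert s R)) - f (insert s R) ≤ f (insert r R) - f R := by
    have := hf (insert r R) (insert s R)
    have hu : insert r R ∪ insert s R = insert r (insert s R) := by
      ext i; simp only [Finset.mem_union, Finset.mem_insert]; tauto
    have hi : insert r R ∩ insert s R = R := by
      rw [Finset.insert_inter_of_notMem (by
        simp only [Finset.mem_insert, not_or]; exact ⟨fun h => hs h.symm, hrR⟩),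
        Finset.inter_eq_left.2 (Finset.subset_insert s R)]
    rw [hu, hi] at this
    linarith
  nlinarith [mul_nonneg (mul_nonneg (sub_nonneg.2 hab) (sub_nonneg.2 hAB)) (mul_nonneg hPpos hQpos)]

/-- For a submodular set function, the partial derivatives of the multilinear
extension are coordinatewise non-increasing on `[0,1]^ℛ`. -/
theorem mlderiv_antitone_of_submodular
    {ℛ : Type*} [Fintype ℛ] [DecidableEq ℛ]
    (f : Finset ℛ → ℝ)
    (hf : ∀ R R' : Finset ℛ, f (R ∪ R') + f (R ∩ R') ≤ f R + f R')
    (x y : ℛ → ℝ) (hx : ∀ r, x r ∈ Set.Icc (0 : ℝ) 1) (hy : ∀ r, y r ∈ Set.Icc (0 : ℝ) 1)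
    (hxy : ∀ r', x r' ≤ y r') (r : ℛ) :
    mlderiv f r y ≤ mlderiv f r x := by
  classical
  set z : Finset ℛ → ℛ → ℝ := fun S i => if i ∈ S then y i else x i with hz
  have hzmem : ∀ S i, z S i ∈ Set.Icc (0:ℝ) 1 := by
    intro S i; simp only [hz]; split <;> [exact hy i; exact hx i]
  have key : ∀ S : Finset ℛ, mlderiv f r (z S) ≤ mlderiv f r x := by
    intro S
    induction S using Finset.induction_on with
    | empty =>
      have : z ∅ = x := by funext i; simp [hz]
      rw [this]
    | insert _ _ hsS =>
      rename_i s S ih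
      by_cases hsr : s = r
      · -- mlderiv doesn't depend on coordinate r
        have heq : mlderiv f r (z (insert s S)) = mlderiv f r (z S) := by
          unfold mlderiv
          apply Finset.sum_congr rfl
          intro R hR
          rw [Finset.mem_powerset] at hR
          have h1 : ∀ i ∈ R, z (insert s S) i = z S i := by
            intro i hi
            have : i ≠ s := fun h => Finset.notMem_erase r _
              (hsr ▸ h ▸ hR hi)
            simp [hz, Finset.mem_insert, this]
          have h2 : ∀ i ∈ (Finset.univ.erase r) \ R, z (insert s S) i = z S i := by
            intro i hi
            have : i ≠ s := fun h => Finset.notMem_erase r _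
              (hsr ▸ h ▸ (Finset.mem_sdiff.1 hi).1)
            simp [hz, Finset.mem_insert, this]
          have e1 : ∏ r' ∈ R, z (insert s S) r' = ∏ r' ∈ R, z S r' :=
            Finset.prod_congr rfl h1
          have e2 : ∏ r' ∈ (Finset.univ.erase r) \ R, (1 - z (insert s S) r')
              = ∏ r' ∈ (Finset.univ.erase r) \ R, (1 - z S r') :=
            Finset.prod_congr rfl (fun i hi => by rw [h2 i hi])
          rw [e1, e2]
        rw [heq]; exact ih
      · have h1 : z (insert s S) = Function.update (z S) s (y s) := by
          funext i
          by_cases his : i = s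
          · subst his; simp [hz]
          · simp [hz, Function.update_of_ne his, Finset.mem_insert, his]
        have h2 : z S = Function.update (z S) s (x s) := by
          funext i
          by_cases his : i = s
          · subst his; simp [hz, hsS]
          · simp [Function.update_of_ne his]
        calc mlderiv f r (z (insert s S))
            = mlderiv f r (Function.update (z S) s (y s)) := by rw [h1]
          _ ≤ mlderiv f r (Function.update (z S) s (x s)) :=
              mlderiv_key f hf (z S) (hzmem S) r s hsr (x s) (y s) (hx s) (hy s) (hxy s)
          _ = mlderiv f r (z S) := by rw [← h2]
          _ ≤ mlderiv f r x := ih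
  have : z Finset.univ = y := by funext i; simp [hz]
  calc mlderiv f r y = mlderiv f r (z Finset.univ) := by rw [this]
    _ ≤ mlderiv f r x := key _
end
end
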